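/- arXiv:1303.1840 — 4 statements merged into one kernel-verified Lean document; each statement's English description precedes it below -/
import Mathlib

section
/- Let ℛ be a finite family of subsets of a finite column set U that has the consecutive-ones property, and let σ be any consecutive-ones ordering of U for ℛ. Then for every connected component 𝒞 of the overlap graph of ℛ, the union of the members of 𝒞 occupies a set of consecutive positions under σ. -/
/-- Two sets *overlap* if they intersect but neither is a subset of the other. -/
def Overlaps {α : Type*} [DecidableEq α] (A B : Finset α) : Prop :=
  (A ∩ B).Nonempty ∧ ¬ A ⊆ B ∧ ¬ B ⊆ A

instance {α : Type*} [DecidableEq α] (A B : Finset α) : Decidable (Overlaps A B) :=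
  inferInstanceAs (Decidable (_ ∧ _ ∧ _))

/-- The overlap graph of a family of sets. -/
def overlapGraph {α : Type*} [DecidableEq α] (𝓡 : Finset (Finset α)) :
    SimpleGraph {R // R ∈ 𝓡} where
  Adj A B := Overlaps A.1 B.1
  symm := ⟨by
    rintro A B ⟨h1, h2, h3⟩
    exact ⟨by rwa [Finset.inter_comm], h3, h2⟩⟩
  loopless := ⟨fun A h => h.2.1 le_rfl⟩

/-- A set `S` is *convex* (occupies consecutive positions) within the column set `U`
under the position assignment `σ`. -/
def ConvexIn {α : Type*} (U : Finset α) (σ : α → ℕ) (S : Set α) : Prop :=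
  ∀ x ∈ U, ∀ y ∈ U, ∀ z ∈ U, σ x ≤ σ y → σ y ≤ σ z → x ∈ S → z ∈ S → y ∈ S

/-- `σ` is a consecutive-ones ordering of the columns `U` for the family `𝓡`:
it linearly orders `U` (injectivity) and every member of `𝓡` is an interval of it. -/
def IsC1POrdering {α : Type*} (U : Finset α) (𝓡 : Finset (Finset α)) (σ : α → ℕ) : Prop :=
  Set.InjOn σ U ∧ ∀ R ∈ 𝓡, ConvexIn U σ (R : Set α)

/-- The family `𝓡` of subsets of the column set `U` has the consecutive-ones property. -/
def HasC1P {α : Type*} (U : Finset α) (𝓡 : Finset (Finset α)) : Prop :=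
  ∃ σ : α → ℕ, IsC1POrdering U 𝓡 σ

/-- `𝓡` is a minimal non-C1P matrix (Tucker matrix) over column set `U`. -/
def MinimalNonC1P {α : Type*} [DecidableEq α] (U : Finset α) (𝓡 : Finset (Finset α)) : Prop :=
  (∀ R ∈ 𝓡, R ⊆ U) ∧ ¬ HasC1P U 𝓡 ∧
    ∀ 𝓡' ⊆ 𝓡, ∀ U' ⊆ U, (𝓡' ≠ 𝓡 ∨ U' ≠ U) →
      HasC1P U' (𝓡'.image (· ∩ U'))

/-- The row `R` is a member of the connected component `𝒞` of the overlap graph of `𝓡`. -/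
def InComponent {α : Type*} [DecidableEq α] (𝓡 : Finset (Finset α))
    (𝒞 : (overlapGraph 𝓡).ConnectedComponent) (R : {R // R ∈ 𝓡}) : Prop :=
  (overlapGraph 𝓡).connectedComponentMk R = 𝒞

/-- Columns `x` and `y` lie in the same Venn class of the component `𝒞`:
they belong to exactly the same members of `𝒞`. -/
def SameVennClass {α : Type*} [DecidableEq α] (𝓡 : Finset (Finset α))
    (𝒞 : (overlapGraph 𝓡).ConnectedComponent) (x y : α) : Prop :=
  ∀ R, InComponent 𝓡 𝒞 R → (x ∈ R.1 ↔ y ∈ R.1)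

/-- The column `x` is constrained for the component `𝒞`: it belongs to at least one
member of `𝒞`. -/
def ConstrainedCol {α : Type*} [DecidableEq α] (𝓡 : Finset (Finset α))
    (𝒞 : (overlapGraph 𝓡).ConnectedComponent) (x : α) : Prop :=
  ∃ R, InComponent 𝓡 𝒞 R ∧ x ∈ R.1

lemma walk_interval_aux {α : Type*} [DecidableEq α]
    (U : Finset α) (𝓡 : Finset (Finset α)) (hsub : ∀ R ∈ 𝓡, R ⊆ U)
    (σ : α → ℕ) (hσ : IsC1POrdering U 𝓡 σ) :
    ∀ {A B : {R // R ∈ 𝓡}} (p : (overlapGraph 𝓡).Walk A B)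
      (x y z : α), x ∈ U → y ∈ U → z ∈ U → σ x ≤ σ y → σ y ≤ σ z →
      x ∈ A.1 → z ∈ B.1 → ∃ R ∈ p.support, y ∈ R.1 := by
  intro A B p
  induction p with
  | nil =>
    rename_i V
    intro x y z hx hy hz hxy hyz hxA hzB
    exact ⟨V, by simp, hσ.2 V.1 V.2 x hx y hy z hz hxy hyz hxA hzB⟩
  | cons h p ih =>
    rename_i V C D
    intro x y z hx hy hz hxy hyz hxA hzB
    obtain ⟨w, hw⟩ := (show Overlaps V.1 C.1 from h).1
    rw [Finset.mem_inter] at hw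
    have hwU : w ∈ U := hsub V.1 V.2 hw.1
    rcases le_total (σ y) (σ w) with hc | hc
    · exact ⟨V, by simp, hσ.2 V.1 V.2 x hx y hy w hwU hxy hc hxA hw.1⟩
    · obtain ⟨R, hR, hyR⟩ := ih w y z hwU hy hz hc hyz hw.2 hzB
      exact ⟨R, by simp [hR], hyR⟩

/-- If `𝓡` has the consecutive-ones property and `σ` is any
consecutive-ones ordering for it, then for every connected component `𝒞` of the
overlap graph of `𝓡`, the union of the members of `𝒞` occupies consecutive
positions under `σ`. -/
theorem component_union_consecutive {α : Type*} [DecidableEq α]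
    (U : Finset α) (𝓡 : Finset (Finset α)) (hsub : ∀ R ∈ 𝓡, R ⊆ U)
    (σ : α → ℕ) (hσ : IsC1POrdering U 𝓡 σ)
    (𝒞 : (overlapGraph 𝓡).ConnectedComponent) :
    ConvexIn U σ {c : α | ∃ R, InComponent 𝓡 𝒞 R ∧ c ∈ R.1} := by
  intro x hx y hy z hz hxy hyz hxS hzS
  obtain ⟨A, hA, hxA⟩ := hxS
  obtain ⟨B, hB, hzB⟩ := hzS
  have hreach : (overlapGraph 𝓡).Reachable A B := by
    have := hA.trans hB.symm
    exact SimpleGraph.ConnectedComponent.exact this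
  obtain ⟨p⟩ := hreach
  obtain ⟨R, hR, hyR⟩ := walk_interval_aux U 𝓡 hsub σ hσ p x y z hx hy hz hxy hyz hxA hzB
  refine ⟨R, ?_, hyR⟩
  have : (overlapGraph 𝓡).Reachable A R := ⟨p.takeUntil R hR⟩
  unfold InComponent at hA ⊢
  rw [← hA]
  exact (SimpleGraph.ConnectedComponent.sound this).symm
end

section
/- Let ℛ be a finite family of subsets of a finite column set U that has the consecutive-ones property, and let 𝒞 be a connected component of the overlap graph of ℛ. Then the left-to-right order of the constrained Venn classes of 𝒞 is the same in every consecutive-ones ordering of ℛ, up to reversal: for any three columns a, b, c lying in three pairwise distinct constrained Venn classes of 𝒞 and any two consecutive-ones orderings σ and τ of ℛ, the column among a, b, c that lies between the other two under σ is the same as the one that lies between the other two under τ. -/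
set_option linter.unusedSectionVars false

section VennAux

open SimpleGraph

variable {α : Type*} [DecidableEq α] {U : Finset α} {𝓡 : Finset (Finset α)}

lemma iff_swap_aux {A B C D : Prop} (h : (A ↔ B) ↔ (C ↔ D)) :
    (A ↔ C) ↔ (B ↔ D) := by tauto

lemma ov_symm {R R' : Finset α} (h : Overlaps R R') : Overlaps R' R :=
  ⟨by rw [Finset.inter_comm]; exact h.1, h.2.2, h.2.1⟩

lemma adj_ov {P N : {R // R ∈ 𝓡}} (h : (overlapGraph 𝓡).Adj P N) : Overlaps P.1 N.1 := h

lemma core_bd {σ : α → ℕ} (hσ : IsC1POrdering U 𝓡 σ) (hsub : ∀ R ∈ 𝓡, R ⊆ U)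
    {R R' : Finset α} (hR : R ∈ 𝓡) (hR' : R' ∈ 𝓡)
    {x y m : α} (hx : x ∈ R) (hx' : x ∉ R') (hy : y ∈ R') (hy' : y ∉ R)
    (hm : m ∈ R) (hm' : m ∈ R') (hxy : σ x < σ y) :
    σ x < σ m ∧ σ m < σ y := by
  have hxU := hsub R hR hx
  have hyU := hsub R' hR' hy
  have hmU := hsub R hR hm
  constructor
  · by_contra h
    push_neg at h
    exact hx' (Finset.mem_coe.1 (hσ.2 R' hR' m hmU x hxU y hyU h hxy.le
      (Finset.mem_coe.2 hm') (Finset.mem_coe.2 hy)))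
  · by_contra h
    push_neg at h
    exact hy' (Finset.mem_coe.1 (hσ.2 R hR x hxU y hyU m hmU hxy.le h
      (Finset.mem_coe.2 hx) (Finset.mem_coe.2 hm)))

/-- Left branch: `R \ R'` is entirely left of `R ∩ R'` which is entirely left of `R' \ R`. -/
def LBr (σ : α → ℕ) (R R' : Finset α) : Prop :=
  ∀ x ∈ R, x ∉ R' → ∀ y ∈ R', y ∉ R → ∀ m ∈ R, m ∈ R' → σ x < σ m ∧ σ m < σ y

/-- `R ∩ R'` occupies the right end of `R`. -/
def Sfx (σ : α → ℕ) (R R' : Finset α) : Prop :=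
  ∀ u ∈ R, u ∉ R' → ∀ m ∈ R, m ∈ R' → σ u < σ m

lemma sigma_ne {σ : α → ℕ} (hσ : IsC1POrdering U 𝓡 σ) {x y : α}
    (hx : x ∈ U) (hy : y ∈ U) (hne : x ≠ y) : σ x ≠ σ y :=
  fun h => hne (hσ.1 hx hy h)

lemma LBr_of_lt {σ : α → ℕ} (hσ : IsC1POrdering U 𝓡 σ) (hsub : ∀ R ∈ 𝓡, R ⊆ U)
    {R R' : Finset α} (hR : R ∈ 𝓡) (hR' : R' ∈ 𝓡) (hov : Overlaps R R')
    {x₀ y₀ : α} (hx₀ : x₀ ∈ R) (hx₀' : x₀ ∉ R') (hy₀ : y₀ ∈ R') (hy₀' : y₀ ∉ R)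
    (hlt : σ x₀ < σ y₀) : LBr σ R R' := by
  obtain ⟨m₀, hm₀⟩ := hov.1
  rw [Finset.mem_inter] at hm₀
  intro x hx hx' y hy hy' m hm hm'
  have hxy : σ x < σ y := by
    have hne : σ x ≠ σ y :=
      sigma_ne hσ (hsub R hR hx) (hsub R' hR' hy) (fun h => hx' (h ▸ hy))
    rcases lt_or_gt_of_ne hne with h | h
    · exact h
    · exfalso
      have A := core_bd hσ hsub hR' hR hy hy' hx hx' hm₀.2 hm₀.1 h
      have hne2 : σ x₀ ≠ σ y :=
        sigma_ne hσ (hsub R hR hx₀) (hsub R' hR' hy) (fun h2 => hx₀' (h2 ▸ hy))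
      rcases lt_or_gt_of_ne hne2 with h2 | h2
      · have B := core_bd hσ hsub hR hR' hx₀ hx₀' hy hy' hm₀.1 hm₀.2 h2
        exact lt_asymm A.1 B.2
      · have B := core_bd hσ hsub hR' hR hy hy' hx₀ hx₀' hm₀.2 hm₀.1 h2
        have C := core_bd hσ hsub hR hR' hx₀ hx₀' hy₀ hy₀' hm₀.1 hm₀.2 hlt
        exact lt_asymm C.1 B.2
  exact core_bd hσ hsub hR hR' hx hx' hy hy' hm hm' hxy

lemma LBr_dichotomy {σ : α → ℕ} (hσ : IsC1POrdering U 𝓡 σ) (hsub : ∀ R ∈ 𝓡, R ⊆ U)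
    {R R' : Finset α} (hR : R ∈ 𝓡) (hR' : R' ∈ 𝓡) (hov : Overlaps R R') :
    LBr σ R R' ∨ LBr σ R' R := by
  obtain ⟨x₀, hx₀, hx₀'⟩ := Finset.not_subset.1 hov.2.1
  obtain ⟨y₀, hy₀, hy₀'⟩ := Finset.not_subset.1 hov.2.2
  have hne : σ x₀ ≠ σ y₀ :=
    sigma_ne hσ (hsub R hR hx₀) (hsub R' hR' hy₀) (fun h => hx₀' (h ▸ hy₀))
  rcases lt_or_gt_of_ne hne with h | h
  · exact Or.inl (LBr_of_lt hσ hsub hR hR' hov hx₀ hx₀' hy₀ hy₀' h)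
  · exact Or.inr (LBr_of_lt hσ hsub hR' hR (ov_symm hov) hy₀ hy₀' hx₀ hx₀' h)

lemma sfx_of_LBr {σ : α → ℕ} {R R' : Finset α} (hov : Overlaps R R')
    (hLB : LBr σ R R') : Sfx σ R R' := by
  obtain ⟨y₀, hy₀, hy₀'⟩ := Finset.not_subset.1 hov.2.2
  intro u hu hu' m hm hm'
  exact (hLB u hu hu' y₀ hy₀ hy₀' m hm hm').1

lemma not_sfx_of_LBr' {σ : α → ℕ} {R R' : Finset α} (hov : Overlaps R R')
    (hLB : LBr σ R' R) : ¬ Sfx σ R R' := by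
  obtain ⟨x₀, hx₀, hx₀'⟩ := Finset.not_subset.1 hov.2.1
  obtain ⟨y₀, hy₀, hy₀'⟩ := Finset.not_subset.1 hov.2.2
  obtain ⟨m₀, hm₀⟩ := hov.1
  rw [Finset.mem_inter] at hm₀
  intro hs
  have h1 := (hLB y₀ hy₀ hy₀' x₀ hx₀ hx₀' m₀ hm₀.2 hm₀.1).2
  exact lt_asymm h1 (hs x₀ hx₀ hx₀' m₀ hm₀.1 hm₀.2)

lemma sfx_swap {σ : α → ℕ} (hσ : IsC1POrdering U 𝓡 σ) (hsub : ∀ R ∈ 𝓡, R ⊆ U)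
    {R R' : Finset α} (hR : R ∈ 𝓡) (hR' : R' ∈ 𝓡) (hov : Overlaps R R') :
    Sfx σ R R' ↔ ¬ Sfx σ R' R := by
  rcases LBr_dichotomy hσ hsub hR hR' hov with hLB | hLB
  · exact iff_of_true (sfx_of_LBr hov hLB) (not_sfx_of_LBr' (ov_symm hov) hLB)
  · exact iff_of_false (not_sfx_of_LBr' hov hLB)
      (not_not_intro (sfx_of_LBr (ov_symm hov) hLB))

lemma key_sign {σ : α → ℕ} (hσ : IsC1POrdering U 𝓡 σ) (hsub : ∀ R ∈ 𝓡, R ⊆ U)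
    {R R' : Finset α} (hR : R ∈ 𝓡) (hR' : R' ∈ 𝓡) (hov : Overlaps R R')
    {u v : α} (hu : u ∈ R) (hv : v ∈ R') (hv' : v ∉ R) :
    (σ u < σ v ↔ Sfx σ R R') := by
  obtain ⟨x₀, hx₀, hx₀'⟩ := Finset.not_subset.1 hov.2.1
  obtain ⟨m₀, hm₀⟩ := hov.1
  rw [Finset.mem_inter] at hm₀
  rcases LBr_dichotomy hσ hsub hR hR' hov with hLB | hLB
  · refine iff_of_true ?_ (sfx_of_LBr hov hLB)
    by_cases hu' : u ∈ R'
    · exact (hLB x₀ hx₀ hx₀' v hv hv' u hu hu').2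
    · exact lt_trans (hLB u hu hu' v hv hv' m₀ hm₀.1 hm₀.2).1
        (hLB u hu hu' v hv hv' m₀ hm₀.1 hm₀.2).2
  · refine iff_of_false ?_ (not_sfx_of_LBr' hov hLB)
    by_cases hu' : u ∈ R'
    · exact lt_asymm (hLB v hv hv' x₀ hx₀ hx₀' u hu' hu).1
    · have := hLB v hv hv' u hu hu' m₀ hm₀.2 hm₀.1
      exact lt_asymm (lt_trans this.1 this.2)

lemma sfx_nested {σ : α → ℕ} (hσ : IsC1POrdering U 𝓡 σ) (hsub : ∀ R ∈ 𝓡, R ⊆ U)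
    {R R' R'' : Finset α} (hR : R ∈ 𝓡) (hR' : R' ∈ 𝓡) (hR'' : R'' ∈ 𝓡)
    (hov' : Overlaps R R') (hov'' : Overlaps R R'')
    (hAB : R ∩ R' ⊆ R ∩ R'') :
    (Sfx σ R R'' → Sfx σ R R') ∧ (Sfx σ R R' → Sfx σ R R'') := by
  obtain ⟨u₀, hu₀, hu₀''⟩ := Finset.not_subset.1 hov''.2.1
  obtain ⟨m₀, hm₀⟩ := hov'.1
  rw [Finset.mem_inter] at hm₀
  have hm₀'' : m₀ ∈ R'' := (Finset.mem_inter.1 (hAB (Finset.mem_inter.2 hm₀))).2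
  have hu₀' : u₀ ∉ R' := fun h =>
    hu₀'' (Finset.mem_inter.1 (hAB (Finset.mem_inter.2 ⟨hu₀, h⟩))).2
  obtain ⟨y', hy', hy''⟩ := Finset.not_subset.1 hov'.2.2
  obtain ⟨z', hz', hz''⟩ := Finset.not_subset.1 hov''.2.2
  constructor
  · intro hsB
    by_contra hns
    have hLB : LBr σ R' R :=
      (LBr_dichotomy hσ hsub hR hR' hov').resolve_left
        (fun h => hns (sfx_of_LBr hov' h))
    have h1 : σ m₀ < σ u₀ := (hLB y' hy' hy'' u₀ hu₀ hu₀' m₀ hm₀.2 hm₀.1).2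
    exact lt_asymm h1 (hsB u₀ hu₀ hu₀'' m₀ hm₀.1 hm₀'')
  · intro hsA
    by_contra hns
    have hLB : LBr σ R'' R :=
      (LBr_dichotomy hσ hsub hR hR'' hov'').resolve_left
        (fun h => hns (sfx_of_LBr hov'' h))
    have h1 : σ m₀ < σ u₀ := (hLB z' hz' hz'' u₀ hu₀ hu₀'' m₀ hm₀'' hm₀.1).2
    exact lt_asymm h1 (hsA u₀ hu₀ hu₀' m₀ hm₀.1 hm₀.2)

lemma sfx_sameEnd {σ : α → ℕ} (hσ : IsC1POrdering U 𝓡 σ) (hsub : ∀ R ∈ 𝓡, R ⊆ U)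
    {R R' R'' : Finset α} (hR : R ∈ 𝓡) (hR' : R' ∈ 𝓡) (hR'' : R'' ∈ 𝓡)
    (hov' : Overlaps R R') (hov'' : Overlaps R R'') :
    (R ∩ R' ⊆ R ∩ R'' ∨ R ∩ R'' ⊆ R ∩ R') ↔ (Sfx σ R R' ↔ Sfx σ R R'') := by
  constructor
  · rintro (h | h)
    · have H := sfx_nested hσ hsub hR hR' hR'' hov' hov'' h
      exact ⟨H.2, H.1⟩
    · have H := sfx_nested hσ hsub hR hR'' hR' hov'' hov' h
      exact ⟨H.1, H.2⟩
  · intro hiff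
    by_contra hnn
    rw [not_or] at hnn
    obtain ⟨a, haA, haB⟩ := Finset.not_subset.1 hnn.1
    obtain ⟨b, hbB, hbA⟩ := Finset.not_subset.1 hnn.2
    rw [Finset.mem_inter] at haA hbB
    have haR'' : a ∉ R'' := fun h => haB (Finset.mem_inter.2 ⟨haA.1, h⟩)
    have hbR' : b ∉ R' := fun h => hbA (Finset.mem_inter.2 ⟨hbB.1, h⟩)
    by_cases hs : Sfx σ R R'
    · have hs'' := hiff.1 hs
      exact lt_asymm (hs'' a haA.1 haR'' b hbB.1 hbB.2)
        (hs b hbB.1 hbR' a haA.1 haA.2)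
    · have hs'' : ¬ Sfx σ R R'' := fun h => hs (hiff.2 h)
      have hL' : LBr σ R' R :=
        (LBr_dichotomy hσ hsub hR hR' hov').resolve_left
          (fun h => hs (sfx_of_LBr hov' h))
      have hL'' : LBr σ R'' R :=
        (LBr_dichotomy hσ hsub hR hR'' hov'').resolve_left
          (fun h => hs'' (sfx_of_LBr hov'' h))
      obtain ⟨y', hy', hy''⟩ := Finset.not_subset.1 hov'.2.2
      obtain ⟨z', hz', hz''⟩ := Finset.not_subset.1 hov''.2.2
      have h1 : σ a < σ b := (hL' y' hy' hy'' b hbB.1 hbR' a haA.2 haA.1).2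
      have h2 : σ b < σ a := (hL'' z' hz' hz'' a haA.1 haR'' b hbB.2 hbB.1).2
      exact lt_asymm h1 h2

/-- Whether `σ` and `τ` agree about which end of `P` the intersection `P ∩ N` sits at. -/
def DD (σ τ : α → ℕ) (P N : {R // R ∈ 𝓡}) : Prop :=
  Sfx σ P.1 N.1 ↔ Sfx τ P.1 N.1

variable {σ τ : α → ℕ}

lemma shareD (hσ : IsC1POrdering U 𝓡 σ) (hτ : IsC1POrdering U 𝓡 τ)
    (hsub : ∀ R ∈ 𝓡, R ⊆ U) {P N N' : {R // R ∈ 𝓡}}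
    (h1 : (overlapGraph 𝓡).Adj P N) (h2 : (overlapGraph 𝓡).Adj P N') :
    DD σ τ P N ↔ DD σ τ P N' := by
  have e1 := sfx_sameEnd (σ := σ) hσ hsub P.2 N.2 N'.2 (adj_ov h1) (adj_ov h2)
  have e2 := sfx_sameEnd (σ := τ) hτ hsub P.2 N.2 N'.2 (adj_ov h1) (adj_ov h2)
  have e3 := e1.symm.trans e2
  unfold DD
  exact iff_swap_aux e3

lemma swapD (hσ : IsC1POrdering U 𝓡 σ) (hτ : IsC1POrdering U 𝓡 τ)
    (hsub : ∀ R ∈ 𝓡, R ⊆ U) {P N : {R // R ∈ 𝓡}}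
    (h : (overlapGraph 𝓡).Adj P N) :
    DD σ τ P N ↔ DD σ τ N P := by
  have s1 := sfx_swap hσ hsub P.2 N.2 (adj_ov h)
  have s2 := sfx_swap hτ hsub P.2 N.2 (adj_ov h)
  unfold DD
  rw [s1, s2]
  exact not_iff_not

lemma walkD (hσ : IsC1POrdering U 𝓡 σ) (hτ : IsC1POrdering U 𝓡 τ)
    (hsub : ∀ R ∈ 𝓡, R ⊆ U) {P Q : {R // R ∈ 𝓡}}
    (W : (overlapGraph 𝓡).Walk P Q) :
    ∀ {N N' : {R // R ∈ 𝓡}}, (overlapGraph 𝓡).Adj P N → (overlapGraph 𝓡).Adj Q N' →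
      (DD σ τ P N ↔ DD σ τ Q N') := by
  induction W with
  | nil => exact fun h1 h2 => shareD hσ hτ hsub h1 h2
  | cons h W ih =>
    intro N N' h1 h2
    exact ((shareD hσ hτ hsub h1 h).trans (swapD hσ hτ hsub h)).trans (ih h.symm h2)

lemma side_agree (hσ : IsC1POrdering U 𝓡 σ) (hsub : ∀ R ∈ 𝓡, R ⊆ U)
    {R : Finset α} (hR : R ∈ 𝓡) {u u' v : α} (hu : u ∈ R) (hu' : u' ∈ R)
    (hv : v ∉ R) (hvU : v ∈ U) :
    (σ u < σ v ↔ σ u' < σ v) := by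
  have huU := hsub R hR hu
  have hu'U := hsub R hR hu'
  constructor
  · intro h
    by_contra h2
    push_neg at h2
    exact hv (Finset.mem_coe.1 (hσ.2 R hR u huU v hvU u' hu'U h.le h2
      (Finset.mem_coe.2 hu) (Finset.mem_coe.2 hu')))
  · intro h
    by_contra h2
    push_neg at h2
    exact hv (Finset.mem_coe.1 (hσ.2 R hR u' hu'U v hvU u huU h.le h2
      (Finset.mem_coe.2 hu') (Finset.mem_coe.2 hu)))

lemma walkSign (hσ : IsC1POrdering U 𝓡 σ) (hτ : IsC1POrdering U 𝓡 τ)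
    (hsub : ∀ R ∈ 𝓡, R ⊆ U) {P Q : {R // R ∈ 𝓡}}
    (W : (overlapGraph 𝓡).Walk P Q) :
    ∀ u, u ∈ P.1 → ∀ v, v ∈ Q.1 → v ∉ P.1 →
      ∀ N, (overlapGraph 𝓡).Adj P N →
      ((σ u < σ v ↔ τ u < τ v) ↔ DD σ τ P N) := by
  induction W with
  | nil => exact fun u hu v hv hv' N hN => absurd hv hv'
  | @cons P P₂ Q h W ih =>
    intro u hu v hv hv' N hN
    by_cases hv₂ : v ∈ P₂.1
    · have k1 := key_sign hσ hsub P.2 P₂.2 (adj_ov h) hu hv₂ hv'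
      have k2 := key_sign hτ hsub P.2 P₂.2 (adj_ov h) hu hv₂ hv'
      have e : (σ u < σ v ↔ τ u < τ v) ↔ DD σ τ P P₂ := by
        unfold DD; rw [k1, k2]
      exact e.trans (shareD hσ hτ hsub h hN)
    · obtain ⟨u', hu'⟩ := (adj_ov h).1
      rw [Finset.mem_inter] at hu'
      have hvU : v ∈ U := hsub Q.1 Q.2 hv
      have s1 := side_agree hσ hsub P.2 hu hu'.1 hv' hvU
      have s2 := side_agree hτ hsub P.2 hu hu'.1 hv' hvU
      have hih := ih u' hu'.2 v hv hv₂ P h.symm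
      have e : (σ u < σ v ↔ τ u < τ v) ↔ DD σ τ P₂ P := by
        rw [s1, s2]; exact hih
      exact e.trans (((swapD hσ hτ hsub h).symm).trans (shareD hσ hτ hsub h hN))

lemma one_side (hσ : IsC1POrdering U 𝓡 σ) (hτ : IsC1POrdering U 𝓡 τ)
    (hsub : ∀ R ∈ 𝓡, R ⊆ U) (𝒞 : (overlapGraph 𝓡).ConnectedComponent)
    {R : {R // R ∈ 𝓡}} (hRC : InComponent 𝓡 𝒞 R)
    {x y : α} (hx : x ∈ R.1) (hy' : y ∉ R.1) (hycon : ConstrainedCol 𝓡 𝒞 y)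
    {P N : {R // R ∈ 𝓡}} (hPN : (overlapGraph 𝓡).Adj P N)
    (hPC : InComponent 𝓡 𝒞 P) :
    ((σ x < σ y ↔ τ x < τ y) ↔ DD σ τ P N) := by
  obtain ⟨Ry, hRyC, hyRy⟩ := hycon
  have hreach : (overlapGraph 𝓡).Reachable R Ry :=
    SimpleGraph.ConnectedComponent.exact (hRC.trans hRyC.symm)
  obtain ⟨W⟩ := hreach
  cases W with
  | nil => exact absurd hyRy hy'
  | cons h W' =>
    have h1 := walkSign hσ hτ hsub (SimpleGraph.Walk.cons h W') x hx y hyRy hy' _ h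
    have hreach2 : (overlapGraph 𝓡).Reachable R P :=
      SimpleGraph.ConnectedComponent.exact (hRC.trans hPC.symm)
    obtain ⟨W2⟩ := hreach2
    exact h1.trans (walkD hσ hτ hsub W2 h hPN)

lemma pair_flip (hσ : IsC1POrdering U 𝓡 σ) (hτ : IsC1POrdering U 𝓡 τ)
    (hsub : ∀ R ∈ 𝓡, R ⊆ U) (𝒞 : (overlapGraph 𝓡).ConnectedComponent)
    {x y : α} (hxU : x ∈ U) (hyU : y ∈ U)
    (hxcon : ConstrainedCol 𝓡 𝒞 x) (hycon : ConstrainedCol 𝓡 𝒞 y)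
    (hxy : ¬ SameVennClass 𝓡 𝒞 x y)
    {P N : {R // R ∈ 𝓡}} (hPN : (overlapGraph 𝓡).Adj P N)
    (hPC : InComponent 𝓡 𝒞 P) :
    ((σ x < σ y ↔ τ x < τ y) ↔ DD σ τ P N) := by
  unfold SameVennClass at hxy
  push_neg at hxy
  obtain ⟨R, hRC, hsep⟩ := hxy
  rcases hsep with ⟨hxR, hyR⟩ | ⟨hxR, hyR⟩
  · exact one_side hσ hτ hsub 𝒞 hRC hxR hyR hycon hPN hPC
  · have h1 := one_side hσ hτ hsub 𝒞 hRC hyR hxR hxcon hPN hPC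
    have hne : x ≠ y := fun h => hxR (h ▸ hyR)
    have hσne := sigma_ne hσ hxU hyU hne
    have hτne := sigma_ne hτ hxU hyU hne
    have s1 : ¬ (σ x < σ y) ↔ σ y < σ x :=
      ⟨fun h => (lt_or_gt_of_ne hσne).resolve_left h, fun h h2 => lt_asymm h h2⟩
    have s2 : ¬ (τ x < τ y) ↔ τ y < τ x :=
      ⟨fun h => (lt_or_gt_of_ne hτne).resolve_left h, fun h h2 => lt_asymm h h2⟩
    refine Iff.trans ?_ h1
    rw [← s1, ← s2]
    exact not_iff_not.symm

lemma exists_refEdge (𝒞 : (overlapGraph 𝓡).ConnectedComponent)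
    {x y : α} (hxcon : ConstrainedCol 𝓡 𝒞 x) (hycon : ConstrainedCol 𝓡 𝒞 y)
    (hxy : ¬ SameVennClass 𝓡 𝒞 x y) :
    ∃ P N : {R // R ∈ 𝓡}, (overlapGraph 𝓡).Adj P N ∧ InComponent 𝓡 𝒞 P := by
  unfold SameVennClass at hxy
  push_neg at hxy
  obtain ⟨R, hRC, hsep⟩ := hxy
  have key : ∀ z : α, z ∉ R.1 → ConstrainedCol 𝓡 𝒞 z →
      ∃ P N : {R // R ∈ 𝓡}, (overlapGraph 𝓡).Adj P N ∧ InComponent 𝓡 𝒞 P := by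
    intro z hz hzcon
    obtain ⟨Rz, hRzC, hzRz⟩ := hzcon
    have hreach : (overlapGraph 𝓡).Reachable R Rz :=
      SimpleGraph.ConnectedComponent.exact (hRC.trans hRzC.symm)
    obtain ⟨W⟩ := hreach
    cases W with
    | nil => exact absurd hzRz hz
    | cons h W' => exact ⟨R, _, h, hRC⟩
  rcases hsep with ⟨hxR, hyR⟩ | ⟨hxR, hyR⟩
  · exact key y hyR hycon
  · exact key x hxR hxcon

lemma main_dir (hsub : ∀ R ∈ 𝓡, R ⊆ U) (𝒞 : (overlapGraph 𝓡).ConnectedComponent)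
    {a b c : α} (haU : a ∈ U) (hbU : b ∈ U) (hcU : c ∈ U)
    (hcona : ConstrainedCol 𝓡 𝒞 a) (hconb : ConstrainedCol 𝓡 𝒞 b)
    (hconc : ConstrainedCol 𝓡 𝒞 c)
    (hab : ¬ SameVennClass 𝓡 𝒞 a b) (hbc : ¬ SameVennClass 𝓡 𝒞 b c)
    (hσ : IsC1POrdering U 𝓡 σ) (hτ : IsC1POrdering U 𝓡 τ) :
    ((σ a < σ b ∧ σ b < σ c) ∨ (σ c < σ b ∧ σ b < σ a)) →
    ((τ a < τ b ∧ τ b < τ c) ∨ (τ c < τ b ∧ τ b < τ a)) := by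
  intro hord
  obtain ⟨P, N, hPN, hPC⟩ := exists_refEdge 𝒞 hcona hconb hab
  have Aab := pair_flip hσ hτ hsub 𝒞 haU hbU hcona hconb hab hPN hPC
  have Abc := pair_flip hσ hτ hsub 𝒞 hbU hcU hconb hconc hbc hPN hPC
  have key : (σ a < σ b ↔ τ a < τ b) ↔ (σ b < σ c ↔ τ b < τ c) :=
    Aab.trans Abc.symm
  have hneab : a ≠ b := fun h => hab (by subst h; exact fun R _ => Iff.rfl)
  have hnebc : b ≠ c := fun h => hbc (by subst h; exact fun R _ => Iff.rfl)
  have hτab := sigma_ne hτ haU hbU hneab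
  have hτbc := sigma_ne hτ hbU hcU hnebc
  rcases hord with ⟨h1, h2⟩ | ⟨h1, h2⟩
  · by_cases hg : τ a < τ b
    · exact Or.inl ⟨hg, (key.1 (iff_of_true h1 hg)).1 h2⟩
    · have h3 : ¬ (σ b < σ c ↔ τ b < τ c) := fun hiff => hg ((key.2 hiff).1 h1)
      have hτnbc : ¬ (τ b < τ c) := fun h => h3 (iff_of_true h2 h)
      exact Or.inr ⟨(lt_or_gt_of_ne hτbc).resolve_left hτnbc,
        (lt_or_gt_of_ne hτab).resolve_left hg⟩
  · by_cases hg : τ a < τ b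
    · have hniff : ¬ (σ a < σ b ↔ τ a < τ b) := fun hiff => lt_asymm h2 (hiff.2 hg)
      have hniff2 : ¬ (σ b < σ c ↔ τ b < τ c) := fun h => hniff (key.2 h)
      have hτbc' : τ b < τ c := by
        by_contra h
        exact hniff2 (iff_of_false (lt_asymm h1) h)
      exact Or.inl ⟨hg, hτbc'⟩
    · have hτba := (lt_or_gt_of_ne hτab).resolve_left hg
      have hiff := iff_of_false (lt_asymm h2) hg
      have hbciff := key.1 hiff
      have hτcb : τ c < τ b := by
        have hnbc : ¬ (τ b < τ c) := fun h => lt_asymm h1 (hbciff.2 h)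
        exact (lt_or_gt_of_ne hτbc).resolve_left hnbc
      exact Or.inr ⟨hτcb, hτba⟩

end VennAux

/-- The left-to-right order of the constrained Venn classes of a
connected component `𝒞` of the overlap graph is the same in every consecutive-ones
ordering, up to reversal: for columns `a, b, c` in three pairwise distinct
constrained Venn classes of `𝒞` and any two consecutive-ones orderings `σ, τ`,
the column `b` lies between `a` and `c` under `σ` iff it does so under `τ`. -/
theorem vennClass_order_unique_up_to_reversal {α : Type*} [DecidableEq α]
    (U : Finset α) (𝓡 : Finset (Finset α)) (hsub : ∀ R ∈ 𝓡, R ⊆ U)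
    (𝒞 : (overlapGraph 𝓡).ConnectedComponent)
    (a b c : α) (ha : a ∈ U) (hb : b ∈ U) (hc : c ∈ U)
    (hcona : ConstrainedCol 𝓡 𝒞 a) (hconb : ConstrainedCol 𝓡 𝒞 b)
    (hconc : ConstrainedCol 𝓡 𝒞 c)
    (hab : ¬ SameVennClass 𝓡 𝒞 a b) (hbc : ¬ SameVennClass 𝓡 𝒞 b c)
    (hac : ¬ SameVennClass 𝓡 𝒞 a c)
    (σ τ : α → ℕ) (hσ : IsC1POrdering U 𝓡 σ) (hτ : IsC1POrdering U 𝓡 τ) :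
    ((σ a < σ b ∧ σ b < σ c) ∨ (σ c < σ b ∧ σ b < σ a)) ↔
      ((τ a < τ b ∧ τ b < τ c) ∨ (τ c < τ b ∧ τ b < τ a)) := by
  exact ⟨main_dir hsub 𝒞 ha hb hc hcona hconb hconc hab hbc hσ hτ,
    main_dir hsub 𝒞 ha hb hc hcona hconb hconc hab hbc hτ hσ⟩
end

section
/- Let ℛ' be a finite family of subsets of a finite column set U that has the consecutive-ones property, let 𝒞 be a connected component of the overlap graph of ℛ', and let Z ⊆ U. Suppose there exist a consecutive-ones ordering σ of ℛ' and columns a, b, c lying in three pairwise distinct constrained Venn classes of 𝒞 such that σ(a) < σ(b) < σ(c), a ∈ Z, b ∉ Z, and c ∈ Z (a 1-0-1 configuration for Z). Then ℛ' ∪ {Z} does not have the consecutive-ones property. -/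
namespace OZO

variable {α : Type*} [DecidableEq α]

/-- `A` lies (strictly) to the left of `B` under `σ`: every column private to `A`
precedes every column private to `B`. -/
def Dir (σ : α → ℕ) (A B : Finset α) : Prop :=
  ∀ x ∈ A \ B, ∀ z ∈ B \ A, σ x < σ z

lemma overlaps_symm {A B : Finset α} (h : Overlaps A B) : Overlaps B A :=
  ⟨by rw [Finset.inter_comm]; exact h.1, h.2.2, h.2.1⟩

section basic

variable {U : Finset α} {σ : α → ℕ} {A B C : Finset α}

lemma between (hinj : Set.InjOn σ U) (hAU : A ⊆ U) (hBU : B ⊆ U)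
    (hcA : ConvexIn U σ (A : Set α)) (hcB : ConvexIn U σ (B : Set α))
    {x w z : α} (hx : x ∈ A \ B) (hw : w ∈ A ∩ B) (hz : z ∈ B \ A)
    (hxz : σ x < σ z) : σ x < σ w ∧ σ w < σ z := by
  obtain ⟨hxA, hxB⟩ := Finset.mem_sdiff.mp hx
  obtain ⟨hzB, hzA⟩ := Finset.mem_sdiff.mp hz
  obtain ⟨hwA, hwB⟩ := Finset.mem_inter.mp hw
  have hxU := hAU hxA; have hzU := hBU hzB; have hwU := hAU hwA
  constructor
  · by_contra h
    push_neg at h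
    exact hxB (Finset.mem_coe.mp
      (hcB w hwU x hxU z hzU h hxz.le (Finset.mem_coe.mpr hwB) (Finset.mem_coe.mpr hzB)))
  · by_contra h
    push_neg at h
    exact hzA (Finset.mem_coe.mp
      (hcA x hxU z hzU w hwU hxz.le h (Finset.mem_coe.mpr hxA) (Finset.mem_coe.mpr hwA)))

lemma dir_total (hO : Overlaps A B) (hinj : Set.InjOn σ U) (hAU : A ⊆ U) (hBU : B ⊆ U)
    (hcA : ConvexIn U σ (A : Set α)) (hcB : ConvexIn U σ (B : Set α)) :
    Dir σ A B ∨ Dir σ B A := by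
  by_cases h : Dir σ A B
  · exact Or.inl h
  right
  unfold Dir at h
  push_neg at h
  obtain ⟨x0, hx0, z0, hz0, hle⟩ := h
  have hx0A := (Finset.mem_sdiff.mp hx0).1
  have hz0A := (Finset.mem_sdiff.mp hz0).2
  have hne0 : σ z0 ≠ σ x0 := fun he =>
    hz0A (hinj (hBU (Finset.mem_sdiff.mp hz0).1) (hAU hx0A) he ▸ hx0A)
  have hlt0 : σ z0 < σ x0 := lt_of_le_of_ne hle hne0
  obtain ⟨w, hw⟩ := hO.1
  have hw' : w ∈ B ∩ A := by rwa [Finset.inter_comm]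
  have h2 := between hinj hBU hAU hcB hcA hz0 hw' hx0 hlt0
  intro z hz x hx
  by_contra hcon
  push_neg at hcon
  have hzA' := (Finset.mem_sdiff.mp hz).2
  have hne : σ x ≠ σ z := fun he =>
    hzA' (hinj (hAU (Finset.mem_sdiff.mp hx).1) (hBU (Finset.mem_sdiff.mp hz).1) he ▸
      (Finset.mem_sdiff.mp hx).1)
  have hlt : σ x < σ z := lt_of_le_of_ne hcon hne
  have h1 := between hinj hAU hBU hcA hcB hx hw hz hlt
  -- compare x and z0
  rcases lt_trichotomy (σ x) (σ z0) with h3 | h3 | h3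
  · have h4 := between hinj hAU hBU hcA hcB hx hw hz0 h3
    exact absurd h4.2 (not_lt.mpr h2.1.le)
  · have hxz0 : x = z0 :=
      hinj (hAU (Finset.mem_sdiff.mp hx).1) (hBU (Finset.mem_sdiff.mp hz0).1) h3
    exact (Finset.mem_sdiff.mp hz0).2 (hxz0 ▸ (Finset.mem_sdiff.mp hx).1)
  · have h4 := between hinj hBU hAU hcB hcA hz0 hw' hx h3
    exact absurd h4.2 (not_lt.mpr h1.1.le)

lemma dir_not_both (hO : Overlaps A B) {σ : α → ℕ} : ¬ (Dir σ A B ∧ Dir σ B A) := by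
  rintro ⟨h1, h2⟩
  obtain ⟨x, hxA, hxB⟩ := Finset.not_subset.mp hO.2.1
  obtain ⟨z, hzB, hzA⟩ := Finset.not_subset.mp hO.2.2
  have hx : x ∈ A \ B := Finset.mem_sdiff.mpr ⟨hxA, hxB⟩
  have hz : z ∈ B \ A := Finset.mem_sdiff.mpr ⟨hzB, hzA⟩
  exact absurd (h1 x hx z hz) (not_lt.mpr (h2 z hz x hx).le)

lemma dir_iff_not (hO : Overlaps A B) (hinj : Set.InjOn σ U) (hAU : A ⊆ U) (hBU : B ⊆ U)
    (hcA : ConvexIn U σ (A : Set α)) (hcB : ConvexIn U σ (B : Set α)) :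
    Dir σ A B ↔ ¬ Dir σ B A :=
  ⟨fun h1 h2 => dir_not_both hO ⟨h1, h2⟩,
   fun h => (dir_total hO hinj hAU hBU hcA hcB).resolve_right h⟩

lemma dir_lt_of_mem_inter_left (hO : Overlaps A B) (hinj : Set.InjOn σ U)
    (hAU : A ⊆ U) (hBU : B ⊆ U)
    (hcA : ConvexIn U σ (A : Set α)) (hcB : ConvexIn U σ (B : Set α))
    (hD : Dir σ A B) {x w : α} (hx : x ∈ A \ B) (hw : w ∈ A ∩ B) : σ x < σ w := by
  obtain ⟨z, hzB, hzA⟩ := Finset.not_subset.mp hO.2.2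
  have hz : z ∈ B \ A := Finset.mem_sdiff.mpr ⟨hzB, hzA⟩
  exact (between hinj hAU hBU hcA hcB hx hw hz (hD x hx z hz)).1

lemma dir_lt_of_mem_inter_right (hO : Overlaps A B) (hinj : Set.InjOn σ U)
    (hAU : A ⊆ U) (hBU : B ⊆ U)
    (hcA : ConvexIn U σ (A : Set α)) (hcB : ConvexIn U σ (B : Set α))
    (hD : Dir σ A B) {w z : α} (hw : w ∈ A ∩ B) (hz : z ∈ B \ A) : σ w < σ z := by
  obtain ⟨x, hxA, hxB⟩ := Finset.not_subset.mp hO.2.1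
  have hx : x ∈ A \ B := Finset.mem_sdiff.mpr ⟨hxA, hxB⟩
  exact (between hinj hAU hBU hcA hcB hx hw hz (hD x hx z hz)).2

end basic

end OZO
namespace OZO

variable {α : Type*} [DecidableEq α]

section prop

variable {U : Finset α} {σ τ : α → ℕ} {A B C : Finset α}

/-- The nestedness condition deciding whether `C` attaches to `B` on the same side as `A`. -/
def Nested (A B C : Finset α) : Prop := A ∩ B ⊆ C ∩ B ∨ C ∩ B ⊆ A ∩ B

lemma prop_nested (hAB : Overlaps A B) (hCB : Overlaps C B)
    (hinj : Set.InjOn σ U) (hAU : A ⊆ U) (hBU : B ⊆ U) (hCU : C ⊆ U)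
    (hcA : ConvexIn U σ (A : Set α)) (hcB : ConvexIn U σ (B : Set α))
    (hcC : ConvexIn U σ (C : Set α))
    (hN : Nested A B C) (hD : Dir σ A B) : Dir σ C B := by
  rcases dir_total hCB hinj hCU hBU hcC hcB with h | h
  · exact h
  exfalso
  rcases hN with h1 | h1
  · -- A ∩ B ⊆ C ∩ B
    obtain ⟨v, hvB, hvC⟩ := Finset.not_subset.mp hCB.2.2
    have hvA : v ∉ A := fun h' => hvC (Finset.mem_inter.mp (h1 (Finset.mem_inter.mpr ⟨h', hvB⟩))).1
    obtain ⟨x, hx⟩ := hAB.1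
    have lx : σ x < σ v := dir_lt_of_mem_inter_right hAB hinj hAU hBU hcA hcB hD hx
      (Finset.mem_sdiff.mpr ⟨hvB, hvA⟩)
    have hxBC : x ∈ B ∩ C := Finset.mem_inter.mpr
      ⟨(Finset.mem_inter.mp hx).2, (Finset.mem_inter.mp (h1 hx)).1⟩
    have lv : σ v < σ x := dir_lt_of_mem_inter_left (overlaps_symm hCB) hinj hBU hCU hcB hcC h
      (Finset.mem_sdiff.mpr ⟨hvB, hvC⟩) hxBC
    exact absurd lx (not_lt.mpr lv.le)
  · -- C ∩ B ⊆ A ∩ B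
    obtain ⟨z, hzB, hzA⟩ := Finset.not_subset.mp hAB.2.2
    have hzC : z ∉ C := fun h' => hzA (Finset.mem_inter.mp (h1 (Finset.mem_inter.mpr ⟨h', hzB⟩))).1
    obtain ⟨x, hx⟩ := hCB.1
    have hxAB : x ∈ A ∩ B := h1 hx
    have l1 : σ x < σ z := dir_lt_of_mem_inter_right hAB hinj hAU hBU hcA hcB hD hxAB
      (Finset.mem_sdiff.mpr ⟨hzB, hzA⟩)
    have hxBC : x ∈ B ∩ C := Finset.mem_inter.mpr
      ⟨(Finset.mem_inter.mp hx).2, (Finset.mem_inter.mp hx).1⟩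
    have l2 : σ z < σ x := dir_lt_of_mem_inter_left (overlaps_symm hCB) hinj hBU hCU hcB hcC h
      (Finset.mem_sdiff.mpr ⟨hzB, hzC⟩) hxBC
    exact absurd l1 (not_lt.mpr l2.le)

lemma prop_cross (hAB : Overlaps A B) (hCB : Overlaps C B)
    (hinj : Set.InjOn σ U) (hAU : A ⊆ U) (hBU : B ⊆ U) (hCU : C ⊆ U)
    (hcA : ConvexIn U σ (A : Set α)) (hcB : ConvexIn U σ (B : Set α))
    (hcC : ConvexIn U σ (C : Set α))
    (hN : ¬ Nested A B C) (hD : Dir σ A B) : Dir σ B C := by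
  unfold Nested at hN
  push_neg at hN
  obtain ⟨u, hu, hu'⟩ := Finset.not_subset.mp hN.1
  obtain ⟨v, hv, hv'⟩ := Finset.not_subset.mp hN.2
  rcases dir_total (overlaps_symm hCB) hinj hBU hCU hcB hcC with h | h
  · exact h
  exfalso
  -- h : Dir σ C B
  have huB := (Finset.mem_inter.mp hu).2
  have huC : u ∉ C := fun hc => hu' (Finset.mem_inter.mpr ⟨hc, huB⟩)
  have hvB := (Finset.mem_inter.mp hv).2
  have hvA : v ∉ A := fun ha => hv' (Finset.mem_inter.mpr ⟨ha, hvB⟩)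
  have l1 : σ u < σ v := dir_lt_of_mem_inter_right hAB hinj hAU hBU hcA hcB hD hu
    (Finset.mem_sdiff.mpr ⟨hvB, hvA⟩)
  have l2 : σ v < σ u := dir_lt_of_mem_inter_right hCB hinj hCU hBU hcC hcB h hv
    (Finset.mem_sdiff.mpr ⟨huB, huC⟩)
  exact absurd l1 (not_lt.mpr l2.le)

end prop

section rev

variable {U : Finset α} {σ : α → ℕ} {A B C : Finset α}

/-- Reversal of an ordering on `U`. -/
def revO (U : Finset α) (σ : α → ℕ) : α → ℕ := fun x => U.sup σ - σ x

lemma rev_lt {x z : α} (hx : x ∈ U) (hz : z ∈ U) :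
    revO U σ x < revO U σ z ↔ σ z < σ x := by
  have h1 : σ x ≤ U.sup σ := Finset.le_sup hx
  have h2 : σ z ≤ U.sup σ := Finset.le_sup hz
  unfold revO
  omega

lemma rev_le {x z : α} (hx : x ∈ U) (hz : z ∈ U) :
    revO U σ x ≤ revO U σ z ↔ σ z ≤ σ x := by
  have h1 : σ x ≤ U.sup σ := Finset.le_sup hx
  have h2 : σ z ≤ U.sup σ := Finset.le_sup hz
  unfold revO
  omega

lemma rev_injOn (hinj : Set.InjOn σ U) : Set.InjOn (revO U σ) U := by
  intro x hx z hz h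
  have h1 : σ x ≤ U.sup σ := Finset.le_sup (Finset.mem_coe.mp hx)
  have h2 : σ z ≤ U.sup σ := Finset.le_sup (Finset.mem_coe.mp hz)
  apply hinj hx hz
  unfold revO at h
  omega

lemma rev_convex {S : Set α} (hc : ConvexIn U σ S) : ConvexIn U (revO U σ) S := by
  intro x hx y hy z hz h1 h2 hxS hzS
  exact hc z hz y hy x hx ((rev_le hy hz).mp h2) ((rev_le hx hy).mp h1) hzS hxS

lemma rev_ordering {𝓡 : Finset (Finset α)} (h : IsC1POrdering U 𝓡 σ) :
    IsC1POrdering U 𝓡 (revO U σ) :=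
  ⟨rev_injOn h.1, fun R hR => rev_convex (h.2 R hR)⟩

lemma dir_rev (hAU : A ⊆ U) (hBU : B ⊆ U) :
    Dir (revO U σ) A B ↔ Dir σ B A := by
  constructor
  · intro h z hz x hx
    exact (rev_lt (hAU (Finset.mem_sdiff.mp hx).1) (hBU (Finset.mem_sdiff.mp hz).1)).mp
      (h x hx z hz)
  · intro h x hx z hz
    exact (rev_lt (hAU (Finset.mem_sdiff.mp hx).1) (hBU (Finset.mem_sdiff.mp hz).1)).mpr
      (h z hz x hx)

end rev

section iffs

variable {U : Finset α} {σ τ : α → ℕ} {A B C : Finset α}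

lemma prop_nested' (hAB : Overlaps A B) (hCB : Overlaps C B)
    (hinj : Set.InjOn σ U) (hAU : A ⊆ U) (hBU : B ⊆ U) (hCU : C ⊆ U)
    (hcA : ConvexIn U σ (A : Set α)) (hcB : ConvexIn U σ (B : Set α))
    (hcC : ConvexIn U σ (C : Set α))
    (hN : Nested A B C) (hD : Dir σ B A) : Dir σ B C := by
  have h1 : Dir (revO U σ) A B := (dir_rev hAU hBU).mpr hD
  have h2 := prop_nested hAB hCB (rev_injOn hinj) hAU hBU hCU
    (rev_convex hcA) (rev_convex hcB) (rev_convex hcC) hN h1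
  exact (dir_rev hCU hBU).mp h2

lemma prop_cross' (hAB : Overlaps A B) (hCB : Overlaps C B)
    (hinj : Set.InjOn σ U) (hAU : A ⊆ U) (hBU : B ⊆ U) (hCU : C ⊆ U)
    (hcA : ConvexIn U σ (A : Set α)) (hcB : ConvexIn U σ (B : Set α))
    (hcC : ConvexIn U σ (C : Set α))
    (hN : ¬ Nested A B C) (hD : Dir σ B A) : Dir σ C B := by
  have h1 : Dir (revO U σ) A B := (dir_rev hAU hBU).mpr hD
  have h2 := prop_cross hAB hCB (rev_injOn hinj) hAU hBU hCU
    (rev_convex hcA) (rev_convex hcB) (rev_convex hcC) hN h1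
  exact (dir_rev hBU hCU).mp h2

lemma nested_symm {A B C : Finset α} (h : Nested A B C) : Nested C B A := h.symm

lemma iff_nested (hAB : Overlaps A B) (hCB : Overlaps C B)
    (hinj : Set.InjOn σ U) (hAU : A ⊆ U) (hBU : B ⊆ U) (hCU : C ⊆ U)
    (hcA : ConvexIn U σ (A : Set α)) (hcB : ConvexIn U σ (B : Set α))
    (hcC : ConvexIn U σ (C : Set α))
    (hN : Nested A B C) : Dir σ A B ↔ Dir σ C B :=
  ⟨prop_nested hAB hCB hinj hAU hBU hCU hcA hcB hcC hN,
   prop_nested hCB hAB hinj hCU hBU hAU hcC hcB hcA (nested_symm hN)⟩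

lemma iff_cross (hAB : Overlaps A B) (hCB : Overlaps C B)
    (hinj : Set.InjOn σ U) (hAU : A ⊆ U) (hBU : B ⊆ U) (hCU : C ⊆ U)
    (hcA : ConvexIn U σ (A : Set α)) (hcB : ConvexIn U σ (B : Set α))
    (hcC : ConvexIn U σ (C : Set α))
    (hN : ¬ Nested A B C) : Dir σ A B ↔ Dir σ B C := by
  constructor
  · exact prop_cross hAB hCB hinj hAU hBU hCU hcA hcB hcC hN
  · intro h
    by_contra hne
    have hBA : Dir σ B A := (dir_total hAB hinj hAU hBU hcA hcB).resolve_left hne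
    have hC : Dir σ C B := prop_cross' hAB hCB hinj hAU hBU hCU hcA hcB hcC hN hBA
    exact dir_not_both (overlaps_symm hCB) ⟨h, hC⟩

lemma agree_transfer (hAB : Overlaps A B) (hCB : Overlaps C B)
    (hinjσ : Set.InjOn σ U) (hinjτ : Set.InjOn τ U)
    (hAU : A ⊆ U) (hBU : B ⊆ U) (hCU : C ⊆ U)
    (hcAσ : ConvexIn U σ (A : Set α)) (hcBσ : ConvexIn U σ (B : Set α))
    (hcCσ : ConvexIn U σ (C : Set α))
    (hcAτ : ConvexIn U τ (A : Set α)) (hcBτ : ConvexIn U τ (B : Set α))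
    (hcCτ : ConvexIn U τ (C : Set α))
    (h : Dir σ A B ↔ Dir τ A B) : Dir σ C B ↔ Dir τ C B := by
  by_cases hN : Nested A B C
  · have e1 := iff_nested hAB hCB hinjσ hAU hBU hCU hcAσ hcBσ hcCσ hN
    have e2 := iff_nested hAB hCB hinjτ hAU hBU hCU hcAτ hcBτ hcCτ hN
    tauto
  · have e1 := iff_cross hAB hCB hinjσ hAU hBU hCU hcAσ hcBσ hcCσ hN
    have e2 := iff_cross hAB hCB hinjτ hAU hBU hCU hcAτ hcBτ hcCτ hN
    have n1 := dir_iff_not hCB hinjσ hCU hBU hcCσ hcBσ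
    have n2 := dir_iff_not hCB hinjτ hCU hBU hcCτ hcBτ
    have m1 := dir_iff_not (overlaps_symm hCB) hinjσ hBU hCU hcBσ hcCσ
    have m2 := dir_iff_not (overlaps_symm hCB) hinjτ hBU hCU hcBτ hcCτ
    tauto

lemma agree_symm (hAB : Overlaps A B)
    (hinjσ : Set.InjOn σ U) (hinjτ : Set.InjOn τ U)
    (hAU : A ⊆ U) (hBU : B ⊆ U)
    (hcAσ : ConvexIn U σ (A : Set α)) (hcBσ : ConvexIn U σ (B : Set α))
    (hcAτ : ConvexIn U τ (A : Set α)) (hcBτ : ConvexIn U τ (B : Set α))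
    (h : Dir σ A B ↔ Dir τ A B) : Dir σ B A ↔ Dir τ B A := by
  have n1 := dir_iff_not (overlaps_symm hAB) hinjσ hBU hAU hcBσ hcAσ
  have n2 := dir_iff_not (overlaps_symm hAB) hinjτ hBU hAU hcBτ hcAτ
  rw [n1, n2]
  exact not_congr h

end iffs

end OZO
namespace OZO

variable {α : Type*} [DecidableEq α]

section side

variable {U : Finset α} {σ : α → ℕ} {R S T : Finset α} {y : α}

/-- Column `y` lies strictly to the left of every column of `R`. -/
def SL (σ : α → ℕ) (y : α) (R : Finset α) : Prop := ∀ r ∈ R, σ y < σ r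

/-- Column `y` lies strictly to the right of every column of `R`. -/
def SR (σ : α → ℕ) (y : α) (R : Finset α) : Prop := ∀ r ∈ R, σ r < σ y

lemma side_total (hinj : Set.InjOn σ U) (hRU : R ⊆ U) (hcR : ConvexIn U σ (R : Set α))
    (hyU : y ∈ U) (hyR : y ∉ R) : SL σ y R ∨ SR σ y R := by
  by_cases h : SL σ y R
  · exact Or.inl h
  right
  unfold SL at h
  push_neg at h
  obtain ⟨r0, hr0, hle⟩ := h
  have hne0 : σ r0 ≠ σ y := fun he => hyR (hinj (hRU hr0) hyU he ▸ hr0)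
  have hlt0 : σ r0 < σ y := lt_of_le_of_ne hle hne0
  intro r hr
  by_contra hcon
  push_neg at hcon
  have hne : σ y ≠ σ r := fun he => hyR (by rw [hinj hyU (hRU hr) he]; exact hr)
  have hlt : σ y < σ r := lt_of_le_of_ne hcon hne
  exact hyR (Finset.mem_coe.mp (hcR r0 (hRU hr0) y hyU r (hRU hr) hlt0.le hlt.le
    (Finset.mem_coe.mpr hr0) (Finset.mem_coe.mpr hr)))

lemma SR_not_SL (h : SR σ y R) (hne : R.Nonempty) : ¬ SL σ y R := by
  obtain ⟨r, hr⟩ := hne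
  exact fun h' => absurd (h' r hr) (not_lt.mpr (h r hr).le)

lemma SL_step (hO : Overlaps S T) (hinj : Set.InjOn σ U) (hTU : T ⊆ U)
    (hcT : ConvexIn U σ (T : Set α)) (hyU : y ∈ U) (hyT : y ∉ T)
    (h : SL σ y S) : SL σ y T := by
  obtain ⟨t, ht⟩ := hO.1
  obtain ⟨htS, htT⟩ := Finset.mem_inter.mp ht
  have h1 : σ y < σ t := h t htS
  rcases side_total hinj hTU hcT hyU hyT with h2 | h2
  · exact h2
  · exact absurd h1 (not_lt.mpr (h2 t htT).le)

lemma SL_step_iff (hO : Overlaps S T) (hinj : Set.InjOn σ U) (hSU : S ⊆ U) (hTU : T ⊆ U)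
    (hcS : ConvexIn U σ (S : Set α)) (hcT : ConvexIn U σ (T : Set α))
    (hyU : y ∈ U) (hyS : y ∉ S) (hyT : y ∉ T) : SL σ y S ↔ SL σ y T :=
  ⟨SL_step hO hinj hTU hcT hyU hyT, SL_step (overlaps_symm hO) hinj hSU hcS hyU hyS⟩

lemma SL_of_dir (hO : Overlaps S T) (hinj : Set.InjOn σ U) (hSU : S ⊆ U) (hTU : T ⊆ U)
    (hcS : ConvexIn U σ (S : Set α)) (hcT : ConvexIn U σ (T : Set α))
    (hD : Dir σ S T) (hy : y ∈ S \ T) : SL σ y T := by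
  intro r hr
  by_cases hrS : r ∈ S
  · exact dir_lt_of_mem_inter_left hO hinj hSU hTU hcS hcT hD hy (Finset.mem_inter.mpr ⟨hrS, hr⟩)
  · exact hD y hy r (Finset.mem_sdiff.mpr ⟨hr, hrS⟩)

lemma SR_of_dir (hO : Overlaps S T) (hinj : Set.InjOn σ U) (hSU : S ⊆ U) (hTU : T ⊆ U)
    (hcS : ConvexIn U σ (S : Set α)) (hcT : ConvexIn U σ (T : Set α))
    (hD : Dir σ T S) (hy : y ∈ S \ T) : SR σ y T := by
  intro r hr
  by_cases hrS : r ∈ S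
  · exact dir_lt_of_mem_inter_right (overlaps_symm hO) hinj hTU hSU hcT hcS hD
      (Finset.mem_inter.mpr ⟨hr, hrS⟩) hy
  · exact hD r (Finset.mem_sdiff.mpr ⟨hr, hrS⟩) y hy

lemma lt_iff_not_SL {x : α} (hinj : Set.InjOn σ U) (hRU : R ⊆ U)
    (hcR : ConvexIn U σ (R : Set α)) (hxR : x ∈ R) (hyU : y ∈ U) (hyR : y ∉ R) :
    σ x < σ y ↔ ¬ SL σ y R := by
  constructor
  · intro h hSL
    exact absurd (hSL x hxR) (not_lt.mpr h.le)
  · intro h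
    rcases side_total hinj hRU hcR hyU hyR with h' | h'
    · exact absurd h' h
    · exact h' x hxR

end side

section graph

variable {U : Finset α} {𝓡 : Finset (Finset α)} {σ τ : α → ℕ}

lemma walk_agree (hsub : ∀ R ∈ 𝓡, R ⊆ U)
    (hσ : IsC1POrdering U 𝓡 σ) (hτ : IsC1POrdering U 𝓡 τ)
    {B B' : {R // R ∈ 𝓡}} (w : (overlapGraph 𝓡).Walk B B') :
    ∀ A A' : {R // R ∈ 𝓡}, (overlapGraph 𝓡).Adj A B → (overlapGraph 𝓡).Adj A' B' →
      (Dir σ A.1 B.1 ↔ Dir τ A.1 B.1) → (Dir σ A'.1 B'.1 ↔ Dir τ A'.1 B'.1) := by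
  induction w with
  | @nil B1 =>
    intro A A' h1 h2 hag
    exact agree_transfer h1 h2 hσ.1 hτ.1 (hsub _ A.2) (hsub _ B1.2) (hsub _ A'.2)
      (hσ.2 _ A.2) (hσ.2 _ B1.2) (hσ.2 _ A'.2) (hτ.2 _ A.2) (hτ.2 _ B1.2) (hτ.2 _ A'.2) hag
  | @cons B X B'' h p ih =>
    intro A A' h1 h2 hag
    have hXB : Dir σ X.1 B.1 ↔ Dir τ X.1 B.1 :=
      agree_transfer h1 h.symm hσ.1 hτ.1 (hsub _ A.2) (hsub _ B.2) (hsub _ X.2)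
        (hσ.2 _ A.2) (hσ.2 _ B.2) (hσ.2 _ X.2) (hτ.2 _ A.2) (hτ.2 _ B.2) (hτ.2 _ X.2) hag
    have hBX : Dir σ B.1 X.1 ↔ Dir τ B.1 X.1 :=
      agree_symm h.symm hσ.1 hτ.1 (hsub _ X.2) (hsub _ B.2)
        (hσ.2 _ X.2) (hσ.2 _ B.2) (hτ.2 _ X.2) (hτ.2 _ B.2) hXB
    exact ih B A' h h2 hBX

lemma side_agree (hsub : ∀ R ∈ 𝓡, R ⊆ U)
    (hσ : IsC1POrdering U 𝓡 σ) (hτ : IsC1POrdering U 𝓡 τ)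
    (B0 : {R // R ∈ 𝓡})
    (AG : ∀ A B : {R // R ∈ 𝓡}, (overlapGraph 𝓡).Adj A B → (overlapGraph 𝓡).Reachable B0 B →
      (Dir σ A.1 B.1 ↔ Dir τ A.1 B.1))
    {R S : {R // R ∈ 𝓡}} (w : (overlapGraph 𝓡).Walk R S) {y : α} (hyU : y ∈ U) :
    y ∈ S.1 → y ∉ R.1 → (overlapGraph 𝓡).Reachable B0 R → (SL σ y R.1 ↔ SL τ y R.1) := by
  induction w with
  | nil =>
    intro h1 h2 _
    exact absurd h1 h2
  | @cons R X S' h p ih =>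
    intro hyS hyR hreach
    by_cases hyX : y ∈ X.1
    · have hagr := AG X R h.symm hreach
      have hOXR : Overlaps X.1 R.1 := h.symm
      have hyXR : y ∈ X.1 \ R.1 := Finset.mem_sdiff.mpr ⟨hyX, hyR⟩
      have hRne : R.1.Nonempty := by
        obtain ⟨t, ht⟩ := hOXR.1
        exact ⟨t, (Finset.mem_inter.mp ht).2⟩
      rcases dir_total hOXR hσ.1 (hsub _ X.2) (hsub _ R.2) (hσ.2 _ X.2) (hσ.2 _ R.2) with hd | hd
      · have hdτ : Dir τ X.1 R.1 := hagr.mp hd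
        exact iff_of_true
          (SL_of_dir hOXR hσ.1 (hsub _ X.2) (hsub _ R.2) (hσ.2 _ X.2) (hσ.2 _ R.2) hd hyXR)
          (SL_of_dir hOXR hτ.1 (hsub _ X.2) (hsub _ R.2) (hτ.2 _ X.2) (hτ.2 _ R.2) hdτ hyXR)
      · have hnσ : ¬ Dir σ X.1 R.1 := fun hx => dir_not_both hOXR ⟨hx, hd⟩
        have hdτ : Dir τ R.1 X.1 :=
          (dir_total hOXR hτ.1 (hsub _ X.2) (hsub _ R.2) (hτ.2 _ X.2) (hτ.2 _ R.2)).resolve_left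
            (fun hx => hnσ (hagr.mpr hx))
        exact iff_of_false
          (SR_not_SL (SR_of_dir hOXR hσ.1 (hsub _ X.2) (hsub _ R.2) (hσ.2 _ X.2) (hσ.2 _ R.2)
            hd hyXR) hRne)
          (SR_not_SL (SR_of_dir hOXR hτ.1 (hsub _ X.2) (hsub _ R.2) (hτ.2 _ X.2) (hτ.2 _ R.2)
            hdτ hyXR) hRne)
    · have hreachX : (overlapGraph 𝓡).Reachable B0 X := hreach.trans h.reachable
      have hiff := ih hyS hyX hreachX
      have hORX : Overlaps R.1 X.1 := h
      have e1 := SL_step_iff hORX hσ.1 (hsub _ R.2) (hsub _ X.2) (hσ.2 _ R.2) (hσ.2 _ X.2)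
        hyU hyR hyX
      have e2 := SL_step_iff hORX hτ.1 (hsub _ R.2) (hsub _ X.2) (hτ.2 _ R.2) (hτ.2 _ X.2)
        hyU hyR hyX
      rw [e1, e2]
      exact hiff

lemma order_pres (hsub : ∀ R ∈ 𝓡, R ⊆ U)
    (hσ : IsC1POrdering U 𝓡 σ) (hτ : IsC1POrdering U 𝓡 τ)
    (B0 : {R // R ∈ 𝓡})
    (AG : ∀ A B : {R // R ∈ 𝓡}, (overlapGraph 𝓡).Adj A B → (overlapGraph 𝓡).Reachable B0 B →
      (Dir σ A.1 B.1 ↔ Dir τ A.1 B.1))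
    {x y : α} (hyU : y ∈ U)
    (R S : {R // R ∈ 𝓡}) (hreach : (overlapGraph 𝓡).Reachable B0 R)
    (hRS : (overlapGraph 𝓡).Reachable R S)
    (hxR : x ∈ R.1) (hyR : y ∉ R.1) (hyS : y ∈ S.1) :
    σ x < σ y ↔ τ x < τ y := by
  obtain ⟨w⟩ := hRS
  have hside := side_agree hsub hσ hτ B0 AG w hyU hyS hyR hreach
  rw [lt_iff_not_SL hσ.1 (hsub _ R.2) (hσ.2 _ R.2) hxR hyU hyR,
      lt_iff_not_SL hτ.1 (hsub _ R.2) (hτ.2 _ R.2) hxR hyU hyR]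
  exact not_congr hside

end graph

end OZO

set_option maxHeartbeats 2000000 in
open OZO in

/-- If `𝓡'` has the consecutive-ones property over `U`, `𝒞` is a
connected component of its overlap graph, and some consecutive-ones ordering `σ`
places columns `a, b, c` of three pairwise distinct constrained Venn classes of `𝒞`
in positions `σ a < σ b < σ c` with `a ∈ Z`, `b ∉ Z`, `c ∈ Z` (a 1-0-1 configuration
for `Z`), then `𝓡' ∪ {Z}` does not have the consecutive-ones property. -/
theorem one_zero_one_violation {α : Type*} [DecidableEq α]
    (U : Finset α) (𝓡' : Finset (Finset α)) (hsub : ∀ R ∈ 𝓡', R ⊆ U)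
    (𝒞 : (overlapGraph 𝓡').ConnectedComponent)
    (Z : Finset α) (hZU : Z ⊆ U)
    (σ : α → ℕ) (hσ : IsC1POrdering U 𝓡' σ)
    (a b c : α) (ha : a ∈ U) (hb : b ∈ U) (hc : c ∈ U)
    (hcona : ConstrainedCol 𝓡' 𝒞 a) (hconb : ConstrainedCol 𝓡' 𝒞 b)
    (hconc : ConstrainedCol 𝓡' 𝒞 c)
    (hab : ¬ SameVennClass 𝓡' 𝒞 a b) (hbc : ¬ SameVennClass 𝓡' 𝒞 b c)
    (hac : ¬ SameVennClass 𝓡' 𝒞 a c)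
    (horder : σ a < σ b ∧ σ b < σ c)
    (haZ : a ∈ Z) (hbZ : b ∉ Z) (hcZ : c ∈ Z) :
    ¬ HasC1P U (insert Z 𝓡') := by
  rintro ⟨τ, hτ⟩
  have hτ' : IsC1POrdering U 𝓡' τ :=
    ⟨hτ.1, fun R hR => hτ.2 R (Finset.mem_insert_of_mem hR)⟩
  obtain ⟨R0, hR0C, haR0⟩ := hcona
  -- witnesses of distinct Venn classes
  have hwit : ∀ {x y : α}, ¬ SameVennClass 𝓡' 𝒞 x y →
      ∃ R, InComponent 𝓡' 𝒞 R ∧ ¬ (x ∈ R.1 ↔ y ∈ R.1) := by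
    intro x y h
    by_contra h'
    push_neg at h'
    exact h h'
  obtain ⟨Rab, hRabC, hRab⟩ := hwit hab
  obtain ⟨Rbc, hRbcC, hRbc⟩ := hwit hbc
  obtain ⟨Rac, hRacC, hRac⟩ := hwit hac
  have hane : a ≠ b := fun h => hab (h ▸ fun R _ => Iff.rfl)
  have hbne : b ≠ c := fun h => hbc (h ▸ fun R _ => Iff.rfl)
  by_cases hnb : ∃ X : {R // R ∈ 𝓡'}, (overlapGraph 𝓡').Adj R0 X
  · -- the component has at least one edge
    obtain ⟨X0, hadj⟩ := hnb
    have hX0C : (overlapGraph 𝓡').connectedComponentMk X0 = 𝒞 := by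
      rw [← hR0C]
      exact SimpleGraph.ConnectedComponent.sound hadj.symm.reachable
    have hreachOf : ∀ S, InComponent 𝓡' 𝒞 S → (overlapGraph 𝓡').Reachable X0 S := by
      intro S hS
      exact SimpleGraph.ConnectedComponent.exact (hX0C.trans hS.symm)
    have hOA : Overlaps R0.1 X0.1 := hadj
    -- choose θ : either τ or its reversal agrees with σ on the base edge
    obtain ⟨θ, hθ, hθbase⟩ : ∃ θ, IsC1POrdering U (insert Z 𝓡') θ ∧
        (Dir σ R0.1 X0.1 ↔ Dir θ R0.1 X0.1) := by
      by_cases hagree : (Dir σ R0.1 X0.1 ↔ Dir τ R0.1 X0.1)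
      · exact ⟨τ, hτ, hagree⟩
      · refine ⟨revO U τ, rev_ordering hτ, ?_⟩
        have h1 : Dir (revO U τ) R0.1 X0.1 ↔ Dir τ X0.1 R0.1 :=
          dir_rev (hsub _ R0.2) (hsub _ X0.2)
        have h2 : Dir τ X0.1 R0.1 ↔ ¬ Dir τ R0.1 X0.1 :=
          dir_iff_not (overlaps_symm hOA) hτ'.1 (hsub _ X0.2) (hsub _ R0.2)
            (hτ'.2 _ X0.2) (hτ'.2 _ R0.2)
        rw [h1, h2]
        tauto
    have hθ' : IsC1POrdering U 𝓡' θ :=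
      ⟨hθ.1, fun R hR => hθ.2 R (Finset.mem_insert_of_mem hR)⟩
    have hZθ : ConvexIn U θ (Z : Set α) := hθ.2 Z (Finset.mem_insert_self _ _)
    -- direction agreement propagates to all edges of the component
    have AG : ∀ A B : {R // R ∈ 𝓡'}, (overlapGraph 𝓡').Adj A B →
        (overlapGraph 𝓡').Reachable X0 B → (Dir σ A.1 B.1 ↔ Dir θ A.1 B.1) := by
      intro A B hAdj hre
      obtain ⟨w⟩ := hre
      exact walk_agree hsub hσ hθ' w R0 A hadj hAdj hθbase
    -- order of columns in distinct Venn classes is preserved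
    have hpair : ∀ {x y : α}, x ∈ U → y ∈ U → ∀ Rxy : {R // R ∈ 𝓡'},
        InComponent 𝓡' 𝒞 Rxy → ¬ (x ∈ Rxy.1 ↔ y ∈ Rxy.1) →
        ConstrainedCol 𝓡' 𝒞 x → ConstrainedCol 𝓡' 𝒞 y → x ≠ y →
        (σ x < σ y ↔ θ x < θ y) := by
      intro x y hxU hyU Rxy hRxyC hne hcx hcy hxy
      by_cases hxR : x ∈ Rxy.1
      · have hyR : y ∉ Rxy.1 := fun h => hne ⟨fun _ => h, fun _ => hxR⟩
        obtain ⟨S, hSC, hyS⟩ := hcy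
        exact order_pres hsub hσ hθ' X0 AG hyU Rxy S (hreachOf _ hRxyC)
          (SimpleGraph.ConnectedComponent.exact (hRxyC.trans hSC.symm)) hxR hyR hyS
      · have hyR : y ∈ Rxy.1 := by tauto
        obtain ⟨S, hSC, hxS⟩ := hcx
        have h := order_pres hsub hσ hθ' X0 AG hxU Rxy S (hreachOf _ hRxyC)
          (SimpleGraph.ConnectedComponent.exact (hRxyC.trans hSC.symm)) hyR hxR hxS
        have hσne : σ x ≠ σ y := fun h' => hxy (hσ.1 hxU hyU h')
        have hθne : θ x ≠ θ y := fun h' => hxy (hθ'.1 hxU hyU h')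
        omega
    have h1 : σ a < σ b ↔ θ a < θ b := hpair ha hb Rab hRabC hRab ⟨R0, hR0C, haR0⟩ hconb hane
    have h2 : σ b < σ c ↔ θ b < θ c := hpair hb hc Rbc hRbcC hRbc hconb hconc hbne
    exact hbZ (Finset.mem_coe.mp (hZθ a ha b hb c hc (h1.mp horder.1).le (h2.mp horder.2).le
      (Finset.mem_coe.mpr haZ) (Finset.mem_coe.mpr hcZ)))
  · -- degenerate case: the component is a single vertex
    have honly : ∀ S : {R // R ∈ 𝓡'}, InComponent 𝓡' 𝒞 S → S = R0 := by
      intro S hS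
      have hre : (overlapGraph 𝓡').Reachable R0 S :=
        SimpleGraph.ConnectedComponent.exact (hR0C.trans hS.symm)
      obtain ⟨w⟩ := hre
      cases w with
      | nil => rfl
      | cons h p => exact absurd ⟨_, h⟩ hnb
    rw [honly Rab hRabC] at hRab
    rw [honly Rbc hRbcC] at hRbc
    rw [honly Rac hRacC] at hRac
    by_cases hb0 : b ∈ R0.1 <;> by_cases hc0 : c ∈ R0.1 <;> tauto
end

section
/- Let ℛ' be a nonempty finite family of subsets of a finite column set U that has the consecutive-ones property and whose overlap graph is connected, let Q be the union of the members of ℛ', and let Z ⊆ U. Then ℛ' ∪ {Z} fails to have the consecutive-ones property if and only if there exist a consecutive-ones ordering σ of ℛ' and columns a, b, c lying in three pairwise distinct constrained Venn classes of ℛ' with σ(a) < σ(b) < σ(c) such that either (a ∈ Z, b ∉ Z, c ∈ Z) or (a ∉ Z, b ∈ Z, c ∉ Z and Z is not a subset of Q). -/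
namespace C1Paux
set_option linter.unusedSectionVars false

variable {α : Type*} [DecidableEq α]

/-- same Venn class -/
def eqv (F : Finset (Finset α)) (x y : α) : Prop := ∀ R ∈ F, (x ∈ R ↔ y ∈ R)

/-- constrained column -/
def con (F : Finset (Finset α)) (x : α) : Prop := ∃ R ∈ F, x ∈ R

lemma eqv_refl (F : Finset (Finset α)) (x : α) : eqv F x x := fun _ _ => Iff.rfl
lemma eqv_symm {F : Finset (Finset α)} {x y : α} (h : eqv F x y) : eqv F y x :=
  fun R hR => (h R hR).symm
lemma eqv_trans {F : Finset (Finset α)} {x y z : α} (h : eqv F x y) (h' : eqv F y z) :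
    eqv F x z := fun R hR => (h R hR).trans (h' R hR)
lemma con_of_eqv {F : Finset (Finset α)} {x y : α} (h : eqv F x y) (hx : con F x) :
    con F y := by obtain ⟨R, hR, hxR⟩ := hx; exact ⟨R, hR, (h R hR).1 hxR⟩

lemma mem_U_of_con {U : Finset α} {F : Finset (Finset α)} (hsub : ∀ R ∈ F, R ⊆ U)
    {x : α} (hx : con F x) : x ∈ U := by
  obtain ⟨R, hR, hxR⟩ := hx; exact hsub R hR hxR

/-- overlap relation on a family -/
def Rel (F : Finset (Finset α)) (A B : Finset α) : Prop := A ∈ F ∧ B ∈ F ∧ Overlaps A B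

def Conn (F : Finset (Finset α)) : Prop :=
  ∀ A ∈ F, ∀ B ∈ F, Relation.ReflTransGen (Rel F) A B

lemma overlaps_symm {A B : Finset α} (h : Overlaps A B) : Overlaps B A :=
  ⟨by rw [Finset.inter_comm]; exact h.1, h.2.2, h.2.1⟩

lemma rel_symm {F : Finset (Finset α)} {A B : Finset α} (h : Rel F A B) : Rel F B A :=
  ⟨h.2.1, h.1, overlaps_symm h.2.2⟩

lemma rtg_symm {F : Finset (Finset α)} {A B : Finset α}
    (h : Relation.ReflTransGen (Rel F) A B) : Relation.ReflTransGen (Rel F) B A := by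
  induction h with
  | refl => exact Relation.ReflTransGen.refl
  | tail _ hr ih => exact Relation.ReflTransGen.head (rel_symm hr) ih

lemma rtg_mono {F F' : Finset (Finset α)} (hFF : F ⊆ F') {A B : Finset α}
    (h : Relation.ReflTransGen (Rel F) A B) : Relation.ReflTransGen (Rel F') A B := by
  induction h with
  | refl => exact Relation.ReflTransGen.refl
  | tail _ hr ih =>
      exact Relation.ReflTransGen.tail ih ⟨hFF hr.1, hFF hr.2.1, hr.2.2⟩

lemma conn_of_graph {F : Finset (Finset α)} (h : (overlapGraph F).Connected) : Conn F := by
  intro A hA B hB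
  obtain ⟨w⟩ := h ⟨A, hA⟩ ⟨B, hB⟩
  clear h
  generalize hu : (⟨A, hA⟩ : {R // R ∈ F}) = u at w
  generalize hv : (⟨B, hB⟩ : {R // R ∈ F}) = v at w
  have : ∀ (u v : {R // R ∈ F}), (overlapGraph F).Walk u v →
      Relation.ReflTransGen (Rel F) u.1 v.1 := by
    intro u v w
    induction w with
    | nil => exact Relation.ReflTransGen.refl
    | cons h _ ih =>
        exact Relation.ReflTransGen.head ⟨by exact (Subtype.mem _), (Subtype.mem _), h⟩ ih
  have := this u v w
  rw [← hu, ← hv] at this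
  exact this

/-- `q` is strictly between `p` and `r` -/
def Mid (p q r : ℕ) : Prop := (p < q ∧ q < r) ∨ (r < q ∧ q < p)

lemma mid_tri {p q r : ℕ} (h1 : p ≠ q) (h2 : q ≠ r) (h3 : p ≠ r) :
    Mid q p r ∨ Mid p q r ∨ Mid p r q := by unfold Mid; omega

lemma mid_symm {p q r : ℕ} (h : Mid p q r) : Mid r q p := by unfold Mid at *; omega

lemma convexMid {U : Finset α} {σ : α → ℕ} {S : Set α} (hc : ConvexIn U σ S)
    {x y z : α} (hx : x ∈ U) (hy : y ∈ U) (hz : z ∈ U) (hxS : x ∈ S) (hzS : z ∈ S)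
    (hm : Mid (σ x) (σ y) (σ z)) : y ∈ S := by
  rcases hm with ⟨h1, h2⟩ | ⟨h1, h2⟩
  · exact hc x hx y hy z hz h1.le h2.le hxS hzS
  · exact hc z hz y hy x hx h1.le h2.le hzS hxS


section Lemmas
variable {U : Finset α} {F : Finset (Finset α)} {σ : α → ℕ}

lemma isc1p_mono {F' : Finset (Finset α)} (hFF : F' ⊆ F) (hσ : IsC1POrdering U F σ) :
    IsC1POrdering U F' σ := ⟨hσ.1, fun R hR => hσ.2 R (hFF hR)⟩

noncomputable def revOf (U : Finset α) (σ : α → ℕ) : α → ℕ := fun x => U.sup σ - σ x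

lemma le_sup' {x : α} (hx : x ∈ U) : σ x ≤ U.sup σ := Finset.le_sup hx

lemma revOf_ordering (hσ : IsC1POrdering U F σ) : IsC1POrdering U F (revOf U σ) := by
  constructor
  · intro x hx y hy h
    have hx' := le_sup' (σ := σ) hx
    have hy' := le_sup' (σ := σ) hy
    exact hσ.1 hx hy (by unfold revOf at h; omega)
  · intro R hR x hx y hy z hz h1 h2 hxR hzR
    have hx' := le_sup' (σ := σ) hx
    have hy' := le_sup' (σ := σ) hy
    have hz' := le_sup' (σ := σ) hz
    unfold revOf at h1 h2
    exact hσ.2 R hR z hz y hy x hx (by omega) (by omega) hzR hxR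

lemma revOf_lt {x y : α} (hx : x ∈ U) (hy : y ∈ U) :
    (revOf U σ x < revOf U σ y ↔ σ y < σ x) := by
  have hx' := le_sup' (σ := σ) hx
  have hy' := le_sup' (σ := σ) hy
  unfold revOf; omega

lemma revOf_mid {x y z : α} (hx : x ∈ U) (hy : y ∈ U) (hz : z ∈ U) :
    Mid (revOf U σ x) (revOf U σ y) (revOf U σ z) ↔ Mid (σ x) (σ y) (σ z) := by
  have hx' := le_sup' (σ := σ) hx
  have hy' := le_sup' (σ := σ) hy
  have hz' := le_sup' (σ := σ) hz
  unfold revOf Mid; omega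

lemma L1walk (hsub : ∀ R ∈ F, R ⊆ U) (hσ : IsC1POrdering U F σ) :
    ∀ {A B : Finset α}, Relation.ReflTransGen (Rel F) A B → A ∈ F → B ∈ F →
    ∀ x ∈ A, ∀ z ∈ B, ∀ y ∈ U, σ x ≤ σ y → σ y ≤ σ z → con F y := by
  intro A B h
  induction h using Relation.ReflTransGen.head_induction_on with
  | refl =>
      intro hB _ x hx z hz y hy h1 h2
      exact ⟨B, hB, hσ.2 B hB x (hsub B hB hx) y hy z (hsub B hB hz) h1 h2 hx hz⟩
  | head hr hrtg ih =>
      intro hA hB x hx z hz y hy h1 h2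
      obtain ⟨w, hw⟩ := hr.2.2.1
      rw [Finset.mem_inter] at hw
      rcases le_or_gt (σ y) (σ w) with hyw | hwy
      · exact ⟨_, hA, hσ.2 _ hA x (hsub _ hA hx) y hy w (hsub _ hA hw.1) h1 hyw hx hw.1⟩
      · exact ih hr.2.1 hB w hw.2 z hz y hy hwy.le h2

lemma conMid (hsub : ∀ R ∈ F, R ⊆ U) (hσ : IsC1POrdering U F σ) (hC : Conn F)
    {x z y : α} (hx : con F x) (hz : con F z) (hy : y ∈ U)
    (hm : Mid (σ x) (σ y) (σ z)) : con F y := by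
  obtain ⟨A, hA, hxA⟩ := hx
  obtain ⟨B, hB, hzB⟩ := hz
  rcases hm with ⟨h1, h2⟩ | ⟨h1, h2⟩
  · exact L1walk hsub hσ (hC A hA B hB) hA hB x hxA z hzB y hy h1.le h2.le
  · exact L1walk hsub hσ (hC B hB A hA) hB hA z hzB x hxA y hy h1.le h2.le

lemma eqvLe (hsub : ∀ R ∈ F, R ⊆ U) (hσ : IsC1POrdering U F σ) (hC : Conn F)
    {x z y : α} (hx : con F x) (he : eqv F x z) (hy : y ∈ U)
    (h1 : σ x ≤ σ y) (h2 : σ y ≤ σ z) : eqv F x y := by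
  by_contra hne
  have : ∃ R ∈ F, ¬ (x ∈ R ↔ y ∈ R) := by
    by_contra h'; push_neg at h'; exact hne h'
  obtain ⟨R, hR, hiff⟩ := this
  have hxU : x ∈ U := mem_U_of_con hsub hx
  have hzU : z ∈ U := mem_U_of_con hsub (con_of_eqv he hx)
  by_cases hxR : x ∈ R
  · have hzR : z ∈ R := (he R hR).1 hxR
    exact hiff ⟨fun _ => hσ.2 R hR x hxU y hy z hzU h1 h2 hxR hzR, fun _ => hxR⟩
  · have hyR : y ∈ R := by
      rcases Decidable.em (y ∈ R) with h | h
      · exact h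
      · exact absurd ⟨fun a => absurd a hxR, fun a => absurd a h⟩ hiff
    have hzR : z ∉ R := fun hz' => hxR ((he R hR).2 hz')
    have key : ∀ B, Relation.ReflTransGen (Rel F) R B → ∀ u ∈ B, σ x < σ u ∧ σ u < σ z := by
      intro B h
      induction h with
      | refl =>
          intro u hu
          have huU : u ∈ U := hsub R hR hu
          constructor
          · by_contra h'; push_neg at h'
            exact hxR (hσ.2 R hR u huU x hxU y hy h' h1 hu hyR)
          · by_contra h'; push_neg at h'
            exact hzR (hσ.2 R hR y hy z hzU u huU h2 h' hyR hu)
      | tail hrtg hr ih =>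
          rename_i b c
          intro u hu
          obtain ⟨w, hw⟩ := hr.2.2.1
          rw [Finset.mem_inter] at hw
          have hbU : b ⊆ U := hsub _ hr.1
          have hcU : c ⊆ U := hsub _ hr.2.1
          have hxc : x ∉ c := by
            intro hxc
            have hzc : z ∈ c := (he c hr.2.1).1 hxc
            refine hr.2.2.2.1 (fun v hv => ?_)
            have hb := ih v hv
            exact hσ.2 c hr.2.1 x hxU v (hbU hv) z hzU hb.1.le hb.2.le hxc hzc
          have hzc : z ∉ c := fun hz' => hxc ((he c hr.2.1).2 hz')
          have hwb := ih w hw.1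
          have huU : u ∈ U := hcU hu
          constructor
          · by_contra h'; push_neg at h'
            exact hxc (hσ.2 c hr.2.1 u huU x hxU w (hbU hw.1) h' hwb.1.le hu hw.2)
          · by_contra h'; push_neg at h'
            exact hzc (hσ.2 c hr.2.1 w (hbU hw.1) z hzU u huU hwb.2.le h' hw.2 hu)
    obtain ⟨S, hS, hxS⟩ := hx
    exact absurd (key S (hC R hR S hS) x hxS).1 (lt_irrefl _)

lemma eqvMid (hsub : ∀ R ∈ F, R ⊆ U) (hσ : IsC1POrdering U F σ) (hC : Conn F)
    {x z y : α} (hx : con F x) (he : eqv F x z) (hy : y ∈ U)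
    (hm : Mid (σ x) (σ y) (σ z)) : eqv F x y := by
  rcases hm with ⟨h1, h2⟩ | ⟨h1, h2⟩
  · exact eqvLe hsub hσ hC hx he hy h1.le h2.le
  · exact eqv_trans he
      (eqvLe hsub hσ hC (con_of_eqv he hx) (eqv_symm he) hy h1.le h2.le)

end Lemmas


section Chain
variable {F : Finset (Finset α)}

def ChainOK : List (Finset α) → Prop
  | [] => True
  | A :: rest => (rest = [] ∨ ∃ B ∈ rest, Overlaps A B) ∧ ChainOK rest

lemma chain_conn : ∀ {L : List (Finset α)}, ChainOK L → Conn L.toFinset := by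
  intro L
  induction L with
  | nil => intro _ A hA; simp at hA
  | cons A rest ih =>
      intro h
      have ihc := ih h.2
      have hsub : rest.toFinset ⊆ (A :: rest).toFinset := by
        intro X hX; rw [List.toFinset_cons]; exact Finset.mem_insert_of_mem hX
      have hAmem : A ∈ (A :: rest).toFinset := by simp
      have step : ∀ X ∈ rest.toFinset, Relation.ReflTransGen (Rel (A :: rest).toFinset) A X := by
        intro X hX
        rcases h.1 with hnil | ⟨B, hB, hov⟩
        · subst hnil; simp at hX
        · have hBt : B ∈ rest.toFinset := List.mem_toFinset.2 hB
          exact Relation.ReflTransGen.head ⟨hAmem, hsub hBt, hov⟩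
            (rtg_mono hsub (ihc B hBt X hX))
      intro X hX Y hY
      rw [List.toFinset_cons, Finset.mem_insert] at hX hY
      rcases hX with rfl | hX <;> rcases hY with rfl | hY
      · exact Relation.ReflTransGen.refl
      · exact step Y hY
      · exact rtg_symm (step X hX)
      · exact rtg_mono hsub (ihc X hX Y hY)

lemma cross (hC : Conn F) {T : Finset (Finset α)} (hTF : T ⊆ F) {B₀ A₀ : Finset α}
    (hB : B₀ ∈ T) (hA : A₀ ∈ F) (hAT : A₀ ∉ T) :
    ∃ A ∈ F, A ∉ T ∧ ∃ B ∈ T, Overlaps A B := by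
  have h := hC B₀ (hTF hB) A₀ hA
  have aux : ∀ {P Q : Finset α}, Relation.ReflTransGen (Rel F) P Q → P ∈ T → Q ∉ T →
      ∃ A ∈ F, A ∉ T ∧ ∃ B ∈ T, Overlaps A B := by
    intro P Q h
    induction h with
    | refl => intro hP hQ; exact absurd hP hQ
    | tail hrtg hr ih =>
        rename_i b c
        intro hP hQ
        by_cases hbT : b ∈ T
        · exact ⟨c, hr.2.1, hQ, b, hbT, overlaps_symm hr.2.2⟩
        · exact ih hP hbT
  exact aux h hB hAT

lemma chain_exists (hC : Conn F) (hne : F.Nonempty) :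
    ∃ L : List (Finset α), L.Nodup ∧ L.toFinset = F ∧ ChainOK L := by
  obtain ⟨R₀, hR₀⟩ := hne
  have aux : ∀ n (L : List (Finset α)), L.Nodup → ChainOK L → L.toFinset ⊆ F →
      L ≠ [] → F.card - L.toFinset.card ≤ n →
      ∃ L' : List (Finset α), L'.Nodup ∧ L'.toFinset = F ∧ ChainOK L' := by
    intro n
    induction n with
    | zero =>
        intro L h1 h2 h3 _ h5
        have hcard := Finset.card_le_card h3
        exact ⟨L, h1, Finset.eq_of_subset_of_card_le h3 (by omega), h2⟩
    | succ n ih =>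
        intro L h1 h2 h3 h4 h5
        by_cases heq : L.toFinset = F
        · exact ⟨L, h1, heq, h2⟩
        · have hA₀ : ∃ A₀ ∈ F, A₀ ∉ L.toFinset := by
            by_contra h'; push_neg at h'
            exact heq (Finset.Subset.antisymm h3 h')
          obtain ⟨A₀, hA₀F, hA₀T⟩ := hA₀
          have hB₀ : ∃ B₀, B₀ ∈ L.toFinset := by
            cases L with
            | nil => exact absurd rfl h4
            | cons A rest => exact ⟨A, by simp⟩
          obtain ⟨B₀, hB₀⟩ := hB₀
          obtain ⟨A, hAF, hAT, B, hBT, hov⟩ := cross hC h3 hB₀ hA₀F hA₀T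
          have hnd : (A :: L).Nodup := by
            rw [List.nodup_cons]
            exact ⟨fun h => hAT (List.mem_toFinset.2 h), h1⟩
          have hok : ChainOK (A :: L) := ⟨Or.inr ⟨B, List.mem_toFinset.1 hBT, hov⟩, h2⟩
          have hsub : (A :: L).toFinset ⊆ F := by
            rw [List.toFinset_cons]
            exact Finset.insert_subset hAF h3
          have hlt : L.toFinset.card < F.card :=
            Finset.card_lt_card (Finset.ssubset_iff_subset_ne.2 ⟨h3, heq⟩)
          have hcard : (A :: L).toFinset.card = L.toFinset.card + 1 := by
            rw [List.toFinset_cons, Finset.card_insert_of_notMem hAT]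
          exact ih (A :: L) hnd hok hsub (by simp) (by omega)
  have h1 : ([R₀] : List (Finset α)).toFinset ⊆ F := by simp [hR₀]
  exact aux F.card [R₀] (by simp) ⟨Or.inl rfl, trivial⟩ h1 (by simp) (by omega)

lemma exists_erase (hC : Conn F) (h2 : 2 ≤ F.card) :
    ∃ R ∈ F, Conn (F.erase R) ∧ (F.erase R).Nonempty ∧ ∃ S ∈ F.erase R, Overlaps R S := by
  obtain ⟨L, hnd, hts, hok⟩ := chain_exists hC (Finset.card_pos.1 (by omega))
  cases L with
  | nil => rw [List.toFinset_nil] at hts; rw [← hts] at h2; simp at h2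
  | cons A rest =>
      have hA : A ∈ F := by rw [← hts]; simp
      have hAn : A ∉ rest.toFinset := by
        rw [List.nodup_cons] at hnd
        exact fun h => hnd.1 (List.mem_toFinset.1 h)
      have hrest : rest.toFinset = F.erase A := by
        rw [← hts, List.toFinset_cons, Finset.erase_insert hAn]
      have hrne : rest ≠ [] := by
        intro h
        rw [h] at hts
        simp at hts
        rw [← hts] at h2
        simp at h2
      rcases hok.1 with h | ⟨B, hB, hov⟩
      · exact absurd h hrne
      · refine ⟨A, hA, by rw [← hrest]; exact chain_conn hok.2, ?_, ?_⟩
        · exact ⟨B, by rw [← hrest]; exact List.mem_toFinset.2 hB⟩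
        · exact ⟨B, by rw [← hrest]; exact List.mem_toFinset.2 hB, hov⟩

end Chain




section Core
variable {U : Finset α} {F : Finset (Finset α)} {σ τ : α → ℕ} {R : Finset α}

lemma ne_of_neqv {x y : α} (h : ¬ eqv F x y) : x ≠ y := by
  rintro rfl; exact h (eqv_refl F x)

lemma neqv_of_memR (hR : R ∈ F) {x y : α} (hx : x ∈ R) (hy : y ∉ R) : ¬ eqv F x y :=
  fun he => hy ((he R hR).1 hx)

lemma midIff {p q r : ℕ} (h : Mid p q r) :
    (p < q ↔ q < r) ∧ (p < q ↔ p < r) ∧ (q < r ↔ p < r) := by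
  unfold Mid at h; omega

/-- Key step: pairs in the same `F.erase R` class but split by `R` follow the direction. -/
lemma hc2 (hsub : ∀ A ∈ F, A ⊆ U) (hR : R ∈ F)
    (hC' : Conn (F.erase R)) (hS : ∃ S ∈ F.erase R, Overlaps R S)
    (hσ : IsC1POrdering U F σ) (hτ : IsC1POrdering U F τ)
    (htwo : ∃ x₀ y₀, con (F.erase R) x₀ ∧ con (F.erase R) y₀ ∧ ¬ eqv (F.erase R) x₀ y₀)
    (hIH : ∀ x y, con (F.erase R) x → con (F.erase R) y → ¬ eqv (F.erase R) x y →
      (σ x < σ y ↔ τ x < τ y)) :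
    ∀ x y, con (F.erase R) x → con (F.erase R) y → eqv (F.erase R) x y →
      ¬ eqv F x y → σ x < σ y → τ x < τ y := by
  intro x y hx hy he hne hxy
  have hsub' : ∀ A ∈ F.erase R, A ⊆ U := fun A hA => hsub A (Finset.erase_subset _ _ hA)
  have hσ' : IsC1POrdering U (F.erase R) σ := isc1p_mono (Finset.erase_subset _ _) hσ
  have hτ' : IsC1POrdering U (F.erase R) τ := isc1p_mono (Finset.erase_subset _ _) hτ
  have hxU : x ∈ U := mem_U_of_con hsub' hx
  have hyU : y ∈ U := mem_U_of_con hsub' hy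
  have hxyne : x ≠ y := ne_of_neqv hne
  have hRsep : (x ∈ R ∧ y ∉ R) ∨ (x ∉ R ∧ y ∈ R) := by
    have hex : ∃ A ∈ F, ¬ (x ∈ A ↔ y ∈ A) := by
      by_contra h'; push_neg at h'; exact hne h'
    obtain ⟨A, hA, hiff⟩ := hex
    have hAR : A = R := by
      by_contra hAR
      exact hiff (he A (Finset.mem_erase.2 ⟨hAR, hA⟩))
    subst hAR
    by_cases h1 : x ∈ A <;> by_cases h2 : y ∈ A
    · exact absurd ⟨fun _ => h2, fun _ => h1⟩ hiff
    · exact Or.inl ⟨h1, h2⟩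
    · exact Or.inr ⟨h1, h2⟩
    · exact absurd ⟨fun a => absurd a h1, fun a => absurd a h2⟩ hiff
  by_cases hw : ∃ w, con (F.erase R) w ∧ w ∈ R ∧ ¬ eqv (F.erase R) w x
  · -- case 2a: a witness w ∈ R of another class
    obtain ⟨w, hwcon, hwR, hwne⟩ := hw
    have hwU : w ∈ U := mem_U_of_con hsub' hwcon
    have hwx : w ≠ x := ne_of_neqv hwne
    have hwy : w ≠ y := fun h => hwne (h ▸ eqv_symm he)
    rcases hRsep with ⟨hxR, hyR⟩ | ⟨hxR, hyR⟩
    · -- x ∈ R, y ∉ R ; fact: Mid (ρ y) (ρ x) (ρ w)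
      have fact : ∀ ρ : α → ℕ, IsC1POrdering U F ρ → Mid (ρ y) (ρ x) (ρ w) := by
        intro ρ hρ
        have hρ' : IsC1POrdering U (F.erase R) ρ := isc1p_mono (Finset.erase_subset _ _) hρ
        have nep : ∀ {a b : α}, a ∈ U → b ∈ U → a ≠ b → ρ a ≠ ρ b :=
          fun ha hb hab h => hab (hρ.1 ha hb h)
        rcases mid_tri (nep hyU hxU hxyne.symm) (nep hxU hwU hwx.symm)
            (nep hyU hwU hwy.symm) with hm | hm | hm
        · -- y mid between x and w : y ∈ R, contradiction
          exact absurd (convexMid (hρ.2 R hR) hxU hyU hwU hxR hwR hm) hyR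
        · exact hm
        · -- w mid between y and x, same class : eqv' y w, contra
          have := eqvMid hsub' hρ' hC' hy (eqv_symm he) hwU hm
          exact absurd (eqv_trans (eqv_symm this) (eqv_symm he)) hwne
      have fσ := fact σ hσ
      have fτ := fact τ hτ
      have hσw : σ w < σ x := by unfold Mid at fσ; omega
      have hτwy : τ w < τ y :=
        (hIH w y hwcon hy (fun h => hwne (eqv_trans h (eqv_symm he)))).1 (by omega)
      unfold Mid at fτ; omega
    · -- y ∈ R, x ∉ R ; fact: Mid (ρ x) (ρ y) (ρ w)
      have fact : ∀ ρ : α → ℕ, IsC1POrdering U F ρ → Mid (ρ x) (ρ y) (ρ w) := by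
        intro ρ hρ
        have hρ' : IsC1POrdering U (F.erase R) ρ := isc1p_mono (Finset.erase_subset _ _) hρ
        have nep : ∀ {a b : α}, a ∈ U → b ∈ U → a ≠ b → ρ a ≠ ρ b :=
          fun ha hb hab h => hab (hρ.1 ha hb h)
        rcases mid_tri (nep hxU hyU hxyne) (nep hyU hwU hwy.symm)
            (nep hxU hwU hwx.symm) with hm | hm | hm
        · exact absurd (convexMid (hρ.2 R hR) hyU hxU hwU hyR hwR hm) hxR
        · exact hm
        · have := eqvMid hsub' hρ' hC' hx he hwU hm
          exact absurd (eqv_symm this) hwne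
      have fσ := fact σ hσ
      have fτ := fact τ hτ
      have hσw : σ x < σ w := by unfold Mid at fσ; omega
      have hτxw : τ x < τ w :=
        (hIH x w hx hwcon (fun h => hwne (eqv_symm h))).1 hσw
      unfold Mid at fτ; omega
  · -- case 2b : everything in R ∩ Q' is in class of x
    have hwall : ∀ w, con (F.erase R) w → w ∈ R → eqv (F.erase R) w x := by
      intro w h1 h2; by_contra h3; exact hw ⟨w, h1, h2, h3⟩
    obtain ⟨S, hSF', hov⟩ := hS
    have hn : ∃ n ∈ R, ¬ con (F.erase R) n := by
      by_contra h'; push_neg at h'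
      obtain ⟨w0, hw0⟩ := hov.1
      rw [Finset.mem_inter] at hw0
      refine hov.2.1 (fun u hu => ?_)
      have h1 : eqv (F.erase R) u x := hwall u (h' u hu) hu
      have h2 : eqv (F.erase R) w0 x := hwall w0 (h' w0 hw0.1) hw0.1
      exact (eqv_trans h1 (eqv_symm h2) S hSF').2 hw0.2
    obtain ⟨n, hnR, hncon⟩ := hn
    have hnU : n ∈ U := hsub R hR hnR
    have hz : ∃ z, con (F.erase R) z ∧ ¬ eqv (F.erase R) z x := by
      obtain ⟨x₀, y₀, hx₀, hy₀, hne₀⟩ := htwo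
      by_cases h' : eqv (F.erase R) x₀ x
      · exact ⟨y₀, hy₀, fun h => hne₀ (eqv_trans h' (eqv_symm h))⟩
      · exact ⟨x₀, hx₀, h'⟩
    obtain ⟨z, hzcon, hzne⟩ := hz
    have hzU : z ∈ U := mem_U_of_con hsub' hzcon
    have hzR : z ∉ R := fun h => hzne (hwall z hzcon h)
    have hnx : n ≠ x := fun h => hncon (h ▸ hx)
    have hny : n ≠ y := fun h => hncon (h ▸ hy)
    have hnz : n ≠ z := fun h => hncon (h ▸ hzcon)
    have hzx : z ≠ x := ne_of_neqv hzne
    have hzy : z ≠ y := fun h => hzne (h ▸ eqv_symm he)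
    rcases hRsep with ⟨hxR, hyR⟩ | ⟨hxR, hyR⟩
    · -- x ∈ R, y ∉ R
      have f1 : ∀ ρ : α → ℕ, IsC1POrdering U F ρ → Mid (ρ n) (ρ x) (ρ z) := by
        intro ρ hρ
        have hρ' : IsC1POrdering U (F.erase R) ρ := isc1p_mono (Finset.erase_subset _ _) hρ
        have nep : ∀ {a b : α}, a ∈ U → b ∈ U → a ≠ b → ρ a ≠ ρ b :=
          fun ha hb hab h => hab (hρ.1 ha hb h)
        rcases mid_tri (nep hnU hxU hnx) (nep hxU hzU hzx.symm)
            (nep hnU hzU hnz) with hm | hm | hm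
        · exact absurd (conMid hsub' hρ' hC' hx hzcon hnU hm) hncon
        · exact hm
        · exact absurd (convexMid (hρ.2 R hR) hnU hzU hxU hnR hxR hm) hzR
      have f3 : ∀ ρ : α → ℕ, IsC1POrdering U F ρ → Mid (ρ y) (ρ x) (ρ n) := by
        intro ρ hρ
        have hρ' : IsC1POrdering U (F.erase R) ρ := isc1p_mono (Finset.erase_subset _ _) hρ
        have nep : ∀ {a b : α}, a ∈ U → b ∈ U → a ≠ b → ρ a ≠ ρ b :=
          fun ha hb hab h => hab (hρ.1 ha hb h)
        rcases mid_tri (nep hyU hxU hxyne.symm) (nep hxU hnU hnx.symm)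
            (nep hyU hnU hny.symm) with hm | hm | hm
        · exact absurd (convexMid (hρ.2 R hR) hxU hyU hnU hxR hnR hm) hyR
        · exact hm
        · have := eqvMid hsub' hρ' hC' hy (eqv_symm he) hnU hm
          exact absurd (con_of_eqv this hy) hncon
      have f1σ := f1 σ hσ; have f1τ := f1 τ hτ
      have f3σ := f3 σ hσ; have f3τ := f3 τ hτ
      have hσn : σ n < σ x := by unfold Mid at f3σ; omega
      have hσxz : σ x < σ z := by unfold Mid at f1σ; omega
      have hnm : ¬ Mid (σ x) (σ z) (σ y) := by
        intro hm
        exact hzne (eqv_symm (eqvMid hsub' hσ' hC' hx he hzU hm))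
      have hσyz : σ y < σ z := by
        have hzyne : σ z ≠ σ y := fun h => hzy (hσ.1 hzU hyU h)
        unfold Mid at hnm; omega
      have hτxz : τ x < τ z :=
        (hIH x z hx hzcon (fun h => hzne (eqv_symm h))).1 hσxz
      have hτyz : τ y < τ z :=
        (hIH y z hy hzcon
          (fun h => hzne (eqv_symm (eqv_trans he h)))).1 hσyz
      unfold Mid at f1τ f3τ; omega
    · -- y ∈ R, x ∉ R
      have f1 : ∀ ρ : α → ℕ, IsC1POrdering U F ρ → Mid (ρ n) (ρ y) (ρ z) := by
        intro ρ hρ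
        have hρ' : IsC1POrdering U (F.erase R) ρ := isc1p_mono (Finset.erase_subset _ _) hρ
        have nep : ∀ {a b : α}, a ∈ U → b ∈ U → a ≠ b → ρ a ≠ ρ b :=
          fun ha hb hab h => hab (hρ.1 ha hb h)
        rcases mid_tri (nep hnU hyU hny) (nep hyU hzU hzy.symm)
            (nep hnU hzU hnz) with hm | hm | hm
        · exact absurd (conMid hsub' hρ' hC' hy hzcon hnU hm) hncon
        · exact hm
        · exact absurd (convexMid (hρ.2 R hR) hnU hzU hyU hnR hyR hm) hzR
      have f3 : ∀ ρ : α → ℕ, IsC1POrdering U F ρ → Mid (ρ x) (ρ y) (ρ n) := by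
        intro ρ hρ
        have hρ' : IsC1POrdering U (F.erase R) ρ := isc1p_mono (Finset.erase_subset _ _) hρ
        have nep : ∀ {a b : α}, a ∈ U → b ∈ U → a ≠ b → ρ a ≠ ρ b :=
          fun ha hb hab h => hab (hρ.1 ha hb h)
        rcases mid_tri (nep hxU hyU hxyne) (nep hyU hnU hny.symm)
            (nep hxU hnU hnx.symm) with hm | hm | hm
        · exact absurd (convexMid (hρ.2 R hR) hyU hxU hnU hyR hnR hm) hxR
        · exact hm
        · have := eqvMid hsub' hρ' hC' hx he hnU hm
          exact absurd (con_of_eqv this hx) hncon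
      have f1σ := f1 σ hσ; have f1τ := f1 τ hτ
      have f3σ := f3 σ hσ; have f3τ := f3 τ hτ
      have hσyn : σ y < σ n := by unfold Mid at f3σ; omega
      have hσzy : σ z < σ y := by unfold Mid at f1σ; omega
      have hnm : ¬ Mid (σ y) (σ z) (σ x) := by
        intro hm
        have := eqvMid hsub' hσ' hC' hy (eqv_symm he) hzU hm
        exact hzne (eqv_trans (eqv_symm this) (eqv_symm he))
      have hσzx : σ z < σ x := by
        have hzxne : σ z ≠ σ x := fun h => hzx (hσ.1 hzU hxU h)
        unfold Mid at hnm; omega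
      have hτzx : τ z < τ x := (hIH z x hzcon hx hzne).1 hσzx
      have hτzy : τ z < τ y :=
        (hIH z y hzcon hy (fun h => hzne (eqv_trans h (eqv_symm he)))).1 hσzy
      unfold Mid at f1τ f3τ; omega


/-- Core step of the uniqueness induction: all constrained pairs follow the direction. -/
lemma core (hsub : ∀ A ∈ F, A ⊆ U) (hR : R ∈ F)
    (hC' : Conn (F.erase R)) (hS : ∃ S ∈ F.erase R, Overlaps R S)
    (hσ : IsC1POrdering U F σ) (hτ : IsC1POrdering U F τ)
    (htwo : ∃ x₀ y₀, con (F.erase R) x₀ ∧ con (F.erase R) y₀ ∧ ¬ eqv (F.erase R) x₀ y₀)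
    (hIH : ∀ x y, con (F.erase R) x → con (F.erase R) y → ¬ eqv (F.erase R) x y →
      (σ x < σ y ↔ τ x < τ y)) :
    ∀ x y, con F x → con F y → ¬ eqv F x y → σ x < σ y → τ x < τ y := by
  have hsub' : ∀ A ∈ F.erase R, A ⊆ U := fun A hA => hsub A (Finset.erase_subset _ _ hA)
  have hσ' : IsC1POrdering U (F.erase R) σ := isc1p_mono (Finset.erase_subset _ _) hσ
  have hτ' : IsC1POrdering U (F.erase R) τ := isc1p_mono (Finset.erase_subset _ _) hτ
  have hdir : ∀ a b, con (F.erase R) a → con (F.erase R) b → ¬ eqv F a b →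
      σ a < σ b → τ a < τ b := by
    intro a b ha hb hne hab
    by_cases he : eqv (F.erase R) a b
    · exact hc2 hsub hR hC' hS hσ hτ htwo hIH a b ha hb he hne hab
    · exact (hIH a b ha hb he).1 hab
  intro x y hx hy hne hxy
  obtain ⟨S, hSF', hov⟩ := hS
  have hSF : S ∈ F := Finset.erase_subset _ _ hSF'
  have hxU : x ∈ U := mem_U_of_con hsub hx
  have hyU : y ∈ U := mem_U_of_con hsub hy
  have hxyne : x ≠ y := ne_of_neqv hne
  by_cases hx' : con (F.erase R) x <;> by_cases hy' : con (F.erase R) y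
  · -- both constrained in F'
    exact hdir x y hx' hy' hne hxy
  · -- y only in R
    have hyR : y ∈ R := by
      obtain ⟨A, hA, hyA⟩ := hy
      by_cases hAR : A = R
      · exact hAR ▸ hyA
      · exact absurd ⟨A, Finset.mem_erase.2 ⟨hAR, hA⟩, hyA⟩ hy'
    by_cases hxR : x ∈ R
    · -- x ∈ R too ; use z ∈ Q' \ R
      obtain ⟨z, hzS, hzR⟩ := Finset.not_subset.1 hov.2.2
      have hzcon : con (F.erase R) z := ⟨S, hSF', hzS⟩
      have hzU : z ∈ U := mem_U_of_con hsub' hzcon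
      have hzx : z ≠ x := fun h => hzR (h ▸ hxR)
      have hzy : z ≠ y := fun h => hzR (h ▸ hyR)
      have fact : ∀ ρ : α → ℕ, IsC1POrdering U F ρ → Mid (ρ z) (ρ x) (ρ y) := by
        intro ρ hρ
        have hρ' : IsC1POrdering U (F.erase R) ρ := isc1p_mono (Finset.erase_subset _ _) hρ
        have nep : ∀ {a b : α}, a ∈ U → b ∈ U → a ≠ b → ρ a ≠ ρ b :=
          fun ha hb hab h => hab (hρ.1 ha hb h)
        rcases mid_tri (nep hzU hxU hzx) (nep hxU hyU hxyne)
            (nep hzU hyU hzy) with hm | hm | hm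
        ·
          exact absurd (convexMid (hρ.2 R hR) hxU hzU hyU hxR hyR hm) hzR
        · exact hm
        · -- Mid ρz ρy ρx : y mid between z and x
          exact absurd (conMid hsub' hρ' hC' hzcon hx' hyU hm) hy'
      have fσ := fact σ hσ; have fτ := fact τ hτ
      have hσzx : σ z < σ x := by unfold Mid at fσ; omega
      have hτzx : τ z < τ x := hdir z x hzcon hx'
        (fun h => hzR ((h R hR).2 hxR)) hσzx
      unfold Mid at fτ; omega
    · -- x ∉ R : use w ∈ R ∩ Q'
      obtain ⟨w, hw⟩ := hov.1
      rw [Finset.mem_inter] at hw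
      have hwcon : con (F.erase R) w := ⟨S, hSF', hw.2⟩
      have hwU : w ∈ U := mem_U_of_con hsub' hwcon
      have hwx : w ≠ x := fun h => hxR (h ▸ hw.1)
      have hwy : w ≠ y := fun h => hy' (h ▸ hwcon)
      have fact : ∀ ρ : α → ℕ, IsC1POrdering U F ρ → Mid (ρ x) (ρ w) (ρ y) := by
        intro ρ hρ
        have hρ' : IsC1POrdering U (F.erase R) ρ := isc1p_mono (Finset.erase_subset _ _) hρ
        have nep : ∀ {a b : α}, a ∈ U → b ∈ U → a ≠ b → ρ a ≠ ρ b :=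
          fun ha hb hab h => hab (hρ.1 ha hb h)
        rcases mid_tri (nep hxU hwU hwx.symm) (nep hwU hyU hwy)
            (nep hxU hyU hxyne) with hm | hm | hm
        · -- Mid ρw ρx ρy : x mid between w and y, both in R
          exact absurd (convexMid (hρ.2 R hR) hwU hxU hyU hw.1 hyR hm) hxR
        · exact hm
        · -- Mid ρx ρy ρw : y mid between x and w, both in Q'
          exact absurd (conMid hsub' hρ' hC' hx' hwcon hyU hm) hy'
      have fσ := fact σ hσ; have fτ := fact τ hτ
      have hσxw : σ x < σ w := by unfold Mid at fσ; omega
      have hτxw : τ x < τ w := hdir x w hx' hwcon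
        (fun h => hxR ((h R hR).2 hw.1)) hσxw
      unfold Mid at fτ; omega
  · -- x only in R
    have hxR : x ∈ R := by
      obtain ⟨A, hA, hxA⟩ := hx
      by_cases hAR : A = R
      · exact hAR ▸ hxA
      · exact absurd ⟨A, Finset.mem_erase.2 ⟨hAR, hA⟩, hxA⟩ hx'
    by_cases hyR : y ∈ R
    · obtain ⟨z, hzS, hzR⟩ := Finset.not_subset.1 hov.2.2
      have hzcon : con (F.erase R) z := ⟨S, hSF', hzS⟩
      have hzU : z ∈ U := mem_U_of_con hsub' hzcon
      have hzx : z ≠ x := fun h => hzR (h ▸ hxR)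
      have hzy : z ≠ y := fun h => hzR (h ▸ hyR)
      have fact : ∀ ρ : α → ℕ, IsC1POrdering U F ρ → Mid (ρ x) (ρ y) (ρ z) := by
        intro ρ hρ
        have hρ' : IsC1POrdering U (F.erase R) ρ := isc1p_mono (Finset.erase_subset _ _) hρ
        have nep : ∀ {a b : α}, a ∈ U → b ∈ U → a ≠ b → ρ a ≠ ρ b :=
          fun ha hb hab h => hab (hρ.1 ha hb h)
        rcases mid_tri (nep hxU hyU hxyne) (nep hyU hzU hzy.symm)
            (nep hxU hzU hzx.symm) with hm | hm | hm
        · -- Mid ρy ρx ρz : x mid between y and z, both in Q'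
          exact absurd (conMid hsub' hρ' hC' hy' hzcon hxU hm) hx'
        · exact hm
        · -- Mid ρx ρz ρy : z mid between x and y, both in R
          exact absurd (convexMid (hρ.2 R hR) hxU hzU hyU hxR hyR hm) hzR
      have fσ := fact σ hσ; have fτ := fact τ hτ
      have hσyz : σ y < σ z := by unfold Mid at fσ; omega
      have hτyz : τ y < τ z := hdir y z hy' hzcon
        (fun h => hzR ((h R hR).1 hyR)) hσyz
      unfold Mid at fτ; omega
    · obtain ⟨w, hw⟩ := hov.1
      rw [Finset.mem_inter] at hw
      have hwcon : con (F.erase R) w := ⟨S, hSF', hw.2⟩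
      have hwU : w ∈ U := mem_U_of_con hsub' hwcon
      have hwx : w ≠ x := fun h => hx' (h ▸ hwcon)
      have hwy : w ≠ y := fun h => hyR (h ▸ hw.1)
      have fact : ∀ ρ : α → ℕ, IsC1POrdering U F ρ → Mid (ρ x) (ρ w) (ρ y) := by
        intro ρ hρ
        have hρ' : IsC1POrdering U (F.erase R) ρ := isc1p_mono (Finset.erase_subset _ _) hρ
        have nep : ∀ {a b : α}, a ∈ U → b ∈ U → a ≠ b → ρ a ≠ ρ b :=
          fun ha hb hab h => hab (hρ.1 ha hb h)
        rcases mid_tri (nep hxU hwU hwx.symm) (nep hwU hyU hwy)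
            (nep hxU hyU hxyne) with hm | hm | hm
        · -- Mid ρw ρx ρy : x mid between w and y, both in Q'
          exact absurd (conMid hsub' hρ' hC' hwcon hy' hxU hm) hx'
        · exact hm
        · -- Mid ρx ρy ρw : y mid between x and w, both in R
          exact absurd (convexMid (hρ.2 R hR) hxU hyU hwU hxR hw.1 hm) hyR
      have fσ := fact σ hσ; have fτ := fact τ hτ
      have hσwy : σ w < σ y := by unfold Mid at fσ; omega
      have hτwy : τ w < τ y := hdir w y hwcon hy'
        (fun h => hyR ((h R hR).1 hw.1)) hσwy
      unfold Mid at fτ; omega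
  · -- neither constrained in F' : they are equivalent, contradiction
    exfalso
    have hxR : x ∈ R := by
      obtain ⟨A, hA, hxA⟩ := hx
      by_cases hAR : A = R
      · exact hAR ▸ hxA
      · exact absurd ⟨A, Finset.mem_erase.2 ⟨hAR, hA⟩, hxA⟩ hx'
    have hyR : y ∈ R := by
      obtain ⟨A, hA, hyA⟩ := hy
      by_cases hAR : A = R
      · exact hAR ▸ hyA
      · exact absurd ⟨A, Finset.mem_erase.2 ⟨hAR, hA⟩, hyA⟩ hy'
    apply hne
    intro A hA
    by_cases hAR : A = R
    · subst hAR; exact iff_of_true hxR hyR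
    · have hA' : A ∈ F.erase R := Finset.mem_erase.2 ⟨hAR, hA⟩
      exact iff_of_false (fun h => hx' ⟨A, hA', h⟩) (fun h => hy' ⟨A, hA', h⟩)


/-- The two-member family case. -/
lemma two (hsub : ∀ A ∈ F, A ⊆ U) (hR : R ∈ F) {S : Finset α} (hSF : S ∈ F)
    (hall : ∀ A ∈ F, A = R ∨ A = S) (hov : Overlaps R S)
    (hσ : IsC1POrdering U F σ) (hτ : IsC1POrdering U F τ) :
    (∀ x y, con F x → con F y → ¬ eqv F x y → (σ x < σ y ↔ τ x < τ y)) ∨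
    (∀ x y, con F x → con F y → ¬ eqv F x y → (σ x < σ y ↔ τ y < τ x)) := by
  obtain ⟨u₀, hu₀R, hu₀S⟩ := Finset.not_subset.1 hov.2.1
  obtain ⟨w₀, hw₀S, hw₀R⟩ := Finset.not_subset.1 hov.2.2
  obtain ⟨v₀, hv₀⟩ := hov.1
  rw [Finset.mem_inter] at hv₀
  have hu₀U : u₀ ∈ U := hsub R hR hu₀R
  have hw₀U : w₀ ∈ U := hsub S hSF hw₀S
  have hv₀U : v₀ ∈ U := hsub R hR hv₀.1
  have fact : ∀ ρ : α → ℕ, IsC1POrdering U F ρ → ∀ u v w, u ∈ R → u ∉ S → v ∈ R → v ∈ S →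
      w ∈ S → w ∉ R → Mid (ρ u) (ρ v) (ρ w) := by
    intro ρ hρ u v w h1 h2 h3 h4 h5 h6
    have huU : u ∈ U := hsub R hR h1
    have hvU : v ∈ U := hsub R hR h3
    have hwU : w ∈ U := hsub S hSF h5
    have nuv : u ≠ v := fun h => h2 (h ▸ h4)
    have nvw : v ≠ w := fun h => h6 (h ▸ h3)
    have nuw : u ≠ w := fun h => h2 (h ▸ h5)
    have nep : ∀ {a b : α}, a ∈ U → b ∈ U → a ≠ b → ρ a ≠ ρ b :=
      fun ha hb hab h => hab (hρ.1 ha hb h)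
    rcases mid_tri (nep huU hvU nuv) (nep hvU hwU nvw) (nep huU hwU nuw) with hm | hm | hm
    · exact absurd (convexMid (hρ.2 S hSF) hvU huU hwU h4 h5 hm) h2
    · exact hm
    · exact absurd (convexMid (hρ.2 R hR) huU hwU hvU h1 h3 hm) h6
  have key12 : ∀ ρ : α → ℕ, IsC1POrdering U F ρ → ∀ a b, a ∈ R → a ∉ S → b ∈ R → b ∈ S →
      (ρ a < ρ b ↔ ρ u₀ < ρ w₀) := by
    intro ρ hρ a b h1 h2 h3 h4
    have m1 := fact ρ hρ a b w₀ h1 h2 h3 h4 hw₀S hw₀R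
    have m2 := fact ρ hρ u₀ b w₀ hu₀R hu₀S h3 h4 hw₀S hw₀R
    unfold Mid at m1 m2; omega
  have key23 : ∀ ρ : α → ℕ, IsC1POrdering U F ρ → ∀ a b, a ∈ R → a ∈ S → b ∈ S → b ∉ R →
      (ρ a < ρ b ↔ ρ u₀ < ρ w₀) := by
    intro ρ hρ a b h1 h2 h3 h4
    have m1 := fact ρ hρ u₀ a b hu₀R hu₀S h1 h2 h3 h4
    have m2 := fact ρ hρ u₀ v₀ b hu₀R hu₀S hv₀.1 hv₀.2 h3 h4
    have m3 := fact ρ hρ u₀ v₀ w₀ hu₀R hu₀S hv₀.1 hv₀.2 hw₀S hw₀R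
    unfold Mid at m1 m2 m3; omega
  have key13 : ∀ ρ : α → ℕ, IsC1POrdering U F ρ → ∀ a b, a ∈ R → a ∉ S → b ∈ S → b ∉ R →
      (ρ a < ρ b ↔ ρ u₀ < ρ w₀) := by
    intro ρ hρ a b h1 h2 h3 h4
    have m1 := fact ρ hρ a v₀ b h1 h2 hv₀.1 hv₀.2 h3 h4
    have m2 := fact ρ hρ a v₀ w₀ h1 h2 hv₀.1 hv₀.2 hw₀S hw₀R
    have m3 := fact ρ hρ u₀ v₀ w₀ hu₀R hu₀S hv₀.1 hv₀.2 hw₀S hw₀R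
    unfold Mid at m1 m2 m3; omega
  have PAT : ∀ a b, con F a → con F b → ¬ eqv F a b →
      (∀ ρ : α → ℕ, IsC1POrdering U F ρ → (ρ a < ρ b ↔ ρ u₀ < ρ w₀)) ∨
      (∀ ρ : α → ℕ, IsC1POrdering U F ρ → (ρ b < ρ a ↔ ρ u₀ < ρ w₀)) := by
    intro a b ha hb hne
    have haRS : a ∈ R ∨ a ∈ S := by
      obtain ⟨A, hA, haA⟩ := ha
      rcases hall A hA with rfl | rfl
      · exact Or.inl haA
      · exact Or.inr haA
    have hbRS : b ∈ R ∨ b ∈ S := by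
      obtain ⟨A, hA, hbA⟩ := hb
      rcases hall A hA with rfl | rfl
      · exact Or.inl hbA
      · exact Or.inr hbA
    have heqv : (a ∈ R ↔ b ∈ R) → (a ∈ S ↔ b ∈ S) → False := by
      intro e1 e2
      apply hne
      intro A hA
      rcases hall A hA with rfl | rfl
      · exact e1
      · exact e2
    by_cases haR : a ∈ R <;> by_cases haS : a ∈ S <;>
      by_cases hbR : b ∈ R <;> by_cases hbS : b ∈ S
    · exact (heqv (iff_of_true haR hbR) (iff_of_true haS hbS)).elim
    · exact Or.inr fun ρ hρ => key12 ρ hρ b a hbR hbS haR haS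
    · exact Or.inl fun ρ hρ => key23 ρ hρ a b haR haS hbS hbR
    · exact absurd hbRS (by simp [hbR, hbS])
    · exact Or.inl fun ρ hρ => key12 ρ hρ a b haR haS hbR hbS
    · exact (heqv (iff_of_true haR hbR) (iff_of_false haS hbS)).elim
    · exact Or.inl fun ρ hρ => key13 ρ hρ a b haR haS hbS hbR
    · exact absurd hbRS (by simp [hbR, hbS])
    · exact Or.inr fun ρ hρ => key23 ρ hρ b a hbR hbS haS haR
    · exact Or.inr fun ρ hρ => key13 ρ hρ b a hbR hbS haS haR
    · exact (heqv (iff_of_false haR hbR) (iff_of_true haS hbS)).elim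
    · exact absurd hbRS (by simp [hbR, hbS])
    · exact absurd haRS (by simp [haR, haS])
    · exact absurd haRS (by simp [haR, haS])
    · exact absurd haRS (by simp [haR, haS])
    · exact absurd haRS (by simp [haR, haS])
  have hu₀w₀ : u₀ ≠ w₀ := fun h => hu₀S (h ▸ hw₀S)
  have hσD : σ u₀ ≠ σ w₀ := fun h => hu₀w₀ (hσ.1 hu₀U hw₀U h)
  have hτD : τ u₀ ≠ τ w₀ := fun h => hu₀w₀ (hτ.1 hu₀U hw₀U h)
  by_cases hD : (σ u₀ < σ w₀ ↔ τ u₀ < τ w₀)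
  · left
    intro x y hx hy hne
    have hσxy : σ x ≠ σ y := fun h =>
      (ne_of_neqv hne) (hσ.1 (mem_U_of_con hsub hx) (mem_U_of_con hsub hy) h)
    have hτxy : τ x ≠ τ y := fun h =>
      (ne_of_neqv hne) (hτ.1 (mem_U_of_con hsub hx) (mem_U_of_con hsub hy) h)
    rcases PAT x y hx hy hne with h | h
    · have h1 := h σ hσ; have h2 := h τ hτ; omega
    · have h1 := h σ hσ; have h2 := h τ hτ; omega
  · right
    intro x y hx hy hne
    have hσxy : σ x ≠ σ y := fun h =>
      (ne_of_neqv hne) (hσ.1 (mem_U_of_con hsub hx) (mem_U_of_con hsub hy) h)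
    have hτxy : τ x ≠ τ y := fun h =>
      (ne_of_neqv hne) (hτ.1 (mem_U_of_con hsub hx) (mem_U_of_con hsub hy) h)
    rcases PAT x y hx hy hne with h | h
    · have h1 := h σ hσ; have h2 := h τ hτ; omega
    · have h1 := h σ hσ; have h2 := h τ hτ; omega


lemma pairAlignAux (U : Finset α) :
    ∀ n (F : Finset (Finset α)) (σ τ : α → ℕ), F.card ≤ n → (∀ A ∈ F, A ⊆ U) →
    Conn F → F.Nonempty → IsC1POrdering U F σ → IsC1POrdering U F τ →
    (∀ x y, con F x → con F y → ¬ eqv F x y → (σ x < σ y ↔ τ x < τ y)) ∨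
    (∀ x y, con F x → con F y → ¬ eqv F x y → (σ x < σ y ↔ τ y < τ x)) := by
  intro n
  induction n with
  | zero =>
      intro F σ τ hcard hsub hC hne hσ hτ
      obtain ⟨A, hA⟩ := hne
      have := Finset.card_pos.2 ⟨A, hA⟩
      omega
  | succ n ih =>
      intro F σ τ hcard hsub hC hne hσ hτ
      by_cases h1 : F.card ≤ 1
      · left
        intro x y hx hy hne'
        exfalso
        apply hne'
        intro A hA
        obtain ⟨Rx, hRx, hxm⟩ := hx
        obtain ⟨Ry, hRy, hym⟩ := hy
        rw [Finset.card_le_one] at h1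
        have e1 := h1 _ hRx _ hA
        have e2 := h1 _ hRy _ hA
        exact iff_of_true (e1 ▸ hxm) (e2 ▸ hym)
      · have h2 : 2 ≤ F.card := by omega
        obtain ⟨R, hR, hC', hne', hS⟩ := exists_erase hC h2
        have hsub' : ∀ A ∈ F.erase R, A ⊆ U := fun A hA => hsub A (Finset.erase_subset _ _ hA)
        have hcard' : (F.erase R).card ≤ n := by
          have := Finset.card_erase_of_mem hR; omega
        have hσ' := isc1p_mono (Finset.erase_subset R F) hσ
        have hτ' := isc1p_mono (Finset.erase_subset R F) hτ
        by_cases htwo : ∃ x₀ y₀, con (F.erase R) x₀ ∧ con (F.erase R) y₀ ∧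
            ¬ eqv (F.erase R) x₀ y₀
        · rcases ih (F.erase R) σ τ hcard' hsub' hC' hne' hσ' hτ' with hL | hRt
          · left
            have hcore := core hsub hR hC' hS hσ hτ htwo hL
            intro x y hx hy hne'
            have hxU := mem_U_of_con hsub hx
            have hyU := mem_U_of_con hsub hy
            constructor
            · exact hcore x y hx hy hne'
            · intro hτxy
              by_contra h'
              push_neg at h'
              rcases lt_or_eq_of_le h' with h'' | h''
              · have hyx := hcore y x hy hx (fun h => hne' (eqv_symm h)) h''
                omega
              · exact (ne_of_neqv hne') (hσ.1 hxU hyU h''.symm)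
          · right
            have hτr : IsC1POrdering U F (revOf U τ) := revOf_ordering hτ
            have hIHr : ∀ x y, con (F.erase R) x → con (F.erase R) y →
                ¬ eqv (F.erase R) x y → (σ x < σ y ↔ revOf U τ x < revOf U τ y) := by
              intro x y hx hy hne''
              rw [revOf_lt (mem_U_of_con hsub' hx) (mem_U_of_con hsub' hy)]
              exact hRt x y hx hy hne''
            have hcore := core hsub hR hC' hS hσ hτr htwo hIHr
            intro x y hx hy hne'
            have hxU := mem_U_of_con hsub hx
            have hyU := mem_U_of_con hsub hy
            constructor
            · intro h
              have := hcore x y hx hy hne' h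
              rwa [revOf_lt hxU hyU] at this
            · intro hτyx
              by_contra h'
              push_neg at h'
              rcases lt_or_eq_of_le h' with h'' | h''
              · have := hcore y x hy hx (fun h => hne' (eqv_symm h)) h''
                rw [revOf_lt hyU hxU] at this
                omega
              · exact (ne_of_neqv hne') (hσ.1 hxU hyU h''.symm)
        · -- F.erase R has a single Venn class: then F.erase R = {S} and we use `two`
          obtain ⟨S, hSF', hov⟩ := hS
          have hone : ∀ x₀ y₀, con (F.erase R) x₀ → con (F.erase R) y₀ →
              eqv (F.erase R) x₀ y₀ := by
            intro x₀ y₀ hx₀ hy₀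
            by_contra h'
            exact htwo ⟨x₀, y₀, hx₀, hy₀, h'⟩
          have hFS : ∀ T ∈ F.erase R, T = S := by
            intro T hT
            by_contra hTS
            have hTne : ∃ t, t ∈ T := by
              rcases (hC' T hT S hSF').cases_head with h | ⟨C, hrel, _⟩
              · exact absurd h hTS
              · obtain ⟨t, ht⟩ := hrel.2.2.1
                rw [Finset.mem_inter] at ht
                exact ⟨t, ht.1⟩
            by_cases hTS' : T ⊆ S
            · have : ∃ u, u ∈ S ∧ u ∉ T := by
                by_contra h'
                push_neg at h'
                exact hTS (Finset.Subset.antisymm hTS' h')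
              obtain ⟨u, huS, huT⟩ := this
              obtain ⟨t, ht⟩ := hTne
              have := hone u t ⟨S, hSF', huS⟩ ⟨T, hT, ht⟩
              exact huT ((this T hT).2 ht)
            · obtain ⟨u, huT, huS⟩ := Finset.not_subset.1 hTS'
              obtain ⟨w0, hw0⟩ := hov.1
              rw [Finset.mem_inter] at hw0
              have := hone u w0 ⟨T, hT, huT⟩ ⟨S, hSF', hw0.2⟩
              exact huS ((this S hSF').2 hw0.2)
          have hall : ∀ A ∈ F, A = R ∨ A = S := by
            intro A hA
            by_cases hAR : A = R
            · exact Or.inl hAR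
            · exact Or.inr (hFS A (Finset.mem_erase.2 ⟨hAR, hA⟩))
          exact two hsub hR (Finset.erase_subset _ _ hSF') hall hov hσ hτ

/-- Uniqueness up to reversal for connected families. -/
lemma pairAlign {U : Finset α} {F : Finset (Finset α)} {σ τ : α → ℕ}
    (hsub : ∀ A ∈ F, A ⊆ U) (hC : Conn F) (hne : F.Nonempty)
    (hσ : IsC1POrdering U F σ) (hτ : IsC1POrdering U F τ) :
    (∀ x y, con F x → con F y → ¬ eqv F x y → (σ x < σ y ↔ τ x < τ y)) ∨
    (∀ x y, con F x → con F y → ¬ eqv F x y → (σ x < σ y ↔ τ y < τ x)) :=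
  pairAlignAux U F.card F σ τ le_rfl hsub hC hne hσ hτ

end Core


section Digits

lemma digitsB {P b1 s1 r1 b2 s2 r2 : ℕ} (hs1 : s1 < P) (hr1 : r1 < P) (hb : b1 < b2) :
    b1*(P*P) + s1*P + r1 < b2*(P*P) + s2*P + r2 := by
  have h1 : s1*P + r1 < P*P := by nlinarith
  have h2 : (b1+1)*(P*P) ≤ b2*(P*P) := Nat.mul_le_mul_right _ hb
  have h3 : b1*(P*P) + s1*P + r1 < (b1+1)*(P*P) := by nlinarith
  have h4 : b2*(P*P) ≤ b2*(P*P) + s2*P + r2 := by omega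
  omega

lemma digitsS {P b s1 r1 s2 r2 : ℕ} (hr1 : r1 < P) (hs : s1 < s2) :
    b*(P*P) + s1*P + r1 < b*(P*P) + s2*P + r2 := by
  have h1 : s1*P + r1 < (s1+1)*P := by nlinarith
  have h2 : (s1+1)*P ≤ s2*P := Nat.mul_le_mul_right _ hs
  have h3 : s2*P ≤ s2*P + r2 := Nat.le_add_right _ _
  omega

lemma digitsR {P b s r1 r2 : ℕ} (hr : r1 < r2) :
    b*(P*P) + s*P + r1 < b*(P*P) + s*P + r2 := by omega

lemma digits_le_b {P b1 s1 r1 b2 s2 r2 : ℕ} (hs2 : s2 < P) (hr2 : r2 < P)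
    (h : b1*(P*P) + s1*P + r1 ≤ b2*(P*P) + s2*P + r2) : b1 ≤ b2 := by
  by_contra h'
  push_neg at h'
  exact absurd h (not_le.2 (digitsB hs2 hr2 h'))

lemma digits_le_s {P b s1 r1 s2 r2 : ℕ} (hr2 : r2 < P)
    (h : b*(P*P) + s1*P + r1 ≤ b*(P*P) + s2*P + r2) : s1 ≤ s2 := by
  by_contra h'
  push_neg at h'
  exact absurd h (not_le.2 (digitsS hr2 h'))

lemma digits_le_r {P b s r1 r2 : ℕ} (h : b*(P*P) + s*P + r1 ≤ b*(P*P) + s*P + r2) :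
    r1 ≤ r2 := by omega

lemma digits_inj {P b1 s1 r1 b2 s2 r2 : ℕ} (hs1 : s1 < P) (hr1 : r1 < P)
    (hs2 : s2 < P) (hr2 : r2 < P)
    (h : b1*(P*P) + s1*P + r1 = b2*(P*P) + s2*P + r2) : b1 = b2 ∧ s1 = s2 ∧ r1 = r2 := by
  have hb : b1 = b2 :=
    le_antisymm (digits_le_b hs2 hr2 h.le) (digits_le_b hs1 hr1 h.ge)
  subst hb
  have hs : s1 = s2 := le_antisymm (digits_le_s hr2 h.le) (digits_le_s hr1 h.ge)
  subst hs
  exact ⟨rfl, rfl, by omega⟩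

end Digits

section Rep
variable {U : Finset α} {F : Finset (Finset α)} {σ : α → ℕ}

lemma exists_rep (_hσ : IsC1POrdering U F σ) :
    ∃ rep : α → α, ∀ x ∈ U, rep x ∈ U ∧ eqv F (rep x) x ∧
      ∀ u ∈ U, eqv F u x → σ (rep x) ≤ σ u := by
  classical
  have h : ∀ x, ∃ x₀, x ∈ U →
      (x₀ ∈ U ∧ eqv F x₀ x ∧ ∀ u ∈ U, eqv F u x → σ x₀ ≤ σ u) := by
    intro x
    by_cases hx : x ∈ U
    · have hne : (U.filter (fun u => eqv F u x)).Nonempty :=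
        ⟨x, Finset.mem_filter.2 ⟨hx, eqv_refl F x⟩⟩
      obtain ⟨x₀, hx₀, hmin⟩ := Finset.exists_min_image _ σ hne
      rw [Finset.mem_filter] at hx₀
      exact ⟨x₀, fun _ => ⟨hx₀.1, hx₀.2,
        fun u hu he => hmin u (Finset.mem_filter.2 ⟨hu, he⟩)⟩⟩
    · exact ⟨x, fun h => absurd h hx⟩
  choose rep hrep using h
  exact ⟨rep, fun x hx => hrep x hx⟩

end Rep


section Construct
variable {U : Finset α} {F : Finset (Finset α)} {σ : α → ℕ}

lemma constructZQ (hsub : ∀ A ∈ F, A ⊆ U) (hC : Conn F) (hσ : IsC1POrdering U F σ)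
    {Z : Finset α} (hZU : Z ⊆ U) (hZQ : ∀ x ∈ Z, con F x)
    (hNo : ¬ ∃ a b c, a ∈ U ∧ b ∈ U ∧ c ∈ U ∧ con F a ∧ con F b ∧ con F c ∧
      ¬ eqv F a b ∧ ¬ eqv F b c ∧ ¬ eqv F a c ∧ σ a < σ b ∧ σ b < σ c ∧
      a ∈ Z ∧ b ∉ Z ∧ c ∈ Z) :
    HasC1P U (insert Z F) := by
  classical
  by_cases hZ : Z.Nonempty
  swap
  · refine ⟨σ, hσ.1, ?_⟩
    intro R hR
    rw [Finset.mem_insert] at hR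
    rcases hR with rfl | hR
    · intro x _ y _ z _ _ _ hxR _
      rw [Finset.not_nonempty_iff_eq_empty] at hZ
      subst hZ
      simp at hxR
    · exact hσ.2 R hR
  obtain ⟨zl, hzlZ, hzlmin⟩ := Finset.exists_min_image Z σ hZ
  obtain ⟨zr, hzrZ, hzrmax⟩ := Finset.exists_max_image Z σ hZ
  have hzlU : zl ∈ U := hZU hzlZ
  have hzrU : zr ∈ U := hZU hzrZ
  obtain ⟨rep, hrep⟩ := exists_rep hσ
  set M := U.sup σ with hM
  set P := M + 2 with hP
  set base : α → ℕ := fun x => σ (rep x) with hbase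
  set sec : α → ℕ := fun x =>
    if eqv F x zl then (if x ∈ Z then 1 else 0)
    else if eqv F x zr then (if x ∈ Z then 0 else 1) else 0 with hsec
  set τ : α → ℕ := fun x => base x * (P*P) + sec x * P + σ x with hτdef
  have hσP : ∀ x ∈ U, σ x < P := fun x hx => by
    have := Finset.le_sup (f := σ) hx; omega
  have hsecP : ∀ x, sec x < P := by
    intro x; simp only [hsec]; split_ifs <;> omega
  have base_le : ∀ x ∈ U, base x ≤ σ x := fun x hx =>
    (hrep x hx).2.2 x hx (eqv_refl F x)
  have base_eqv : ∀ x ∈ U, ∀ y ∈ U, eqv F x y → base x = base y := by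
    intro x hx y hy he
    refine le_antisymm ?_ ?_
    · exact (hrep x hx).2.2 (rep y) (hrep y hy).1
        (eqv_trans (hrep y hy).2.1 (eqv_symm he))
    · exact (hrep y hy).2.2 (rep x) (hrep x hx).1
        (eqv_trans (hrep x hx).2.1 he)
  have base_inj : ∀ x ∈ U, ∀ y ∈ U, base x = base y → eqv F x y := by
    intro x hx y hy hb
    have : rep x = rep y := hσ.1 (hrep x hx).1 (hrep y hy).1 hb
    exact eqv_trans (eqv_symm (hrep x hx).2.1) (this ▸ (hrep y hy).2.1)
  have blk : ∀ x ∈ U, ∀ y ∈ U, con F x → base x < base y → σ x < σ y := by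
    intro x hx y hy hcon hb
    by_contra h'
    push_neg at h'
    rcases lt_or_eq_of_le h' with h'' | h''
    · -- σ y < σ x : rep x is ≤ base x < base y ≤ σ y < σ x, so y is inside x's class
      have h1 : σ (rep x) ≤ σ y := by
        have hb1 : σ (rep x) = base x := rfl
        have := base_le y hy; omega
      have h2 : σ y ≤ σ x := h''.le
      have hcx : con F (rep x) := con_of_eqv (eqv_symm (hrep x hx).2.1) hcon
      have := eqvLe hsub hσ hC hcx (hrep x hx).2.1 hy h1 h2
      -- eqv F (rep x) y, so eqv F x y, so base x = base y
      have hxy : eqv F x y := eqv_trans (eqv_symm (hrep x hx).2.1) this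
      have := base_eqv x hx y hy hxy
      omega
    · -- σ y = σ x : x = y
      have : y = x := hσ.1 hy hx h''
      subst this
      omega
  have tau_le_base : ∀ x ∈ U, ∀ y ∈ U, τ x ≤ τ y → base x ≤ base y := by
    intro x hx y hy h
    exact digits_le_b (hsecP y) (hσP y hy) h
  refine ⟨τ, ?_, ?_⟩
  · intro x hx y hy h
    simp only [hτdef] at h
    obtain ⟨_, _, h3⟩ := digits_inj (hsecP x) (hσP x hx) (hsecP y) (hσP y hy) h
    exact hσ.1 hx hy h3
  · intro R hR
    rw [Finset.mem_insert] at hR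
    rcases hR with hRZ | hR
    · -- the new set Z
      rw [hRZ]
      intro x hxU y hyU z hzU h1 h2 hxZ hzZ
      have hxZ' : x ∈ Z := hxZ
      have hzZ' : z ∈ Z := hzZ
      show y ∈ Z
      by_contra hyZ
      have hxcon : con F x := hZQ x hxZ'
      have hzcon : con F z := hZQ z hzZ'
      have hbxy : base x ≤ base y := tau_le_base x hxU y hyU h1
      have hbyz : base y ≤ base z := tau_le_base y hyU z hzU h2
      by_cases hycon : con F y
      · by_cases hexy : eqv F x y
        · -- C3 : y in the class of x
          by_cases hxzl : eqv F x zl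
          · -- x in the class of zl : sec forces τ y < τ x
            have hyzl : eqv F y zl := eqv_trans (eqv_symm hexy) hxzl
            have hsx : sec x = 1 := by simp only [hsec]; rw [if_pos hxzl, if_pos hxZ']
            have hsy : sec y = 0 := by simp only [hsec]; rw [if_pos hyzl, if_neg hyZ]
            have hb : base y = base x := base_eqv y hyU x hxU (eqv_symm hexy)
            have : τ y < τ x := by
              simp only [hτdef]
              rw [hb, hsx, hsy]
              exact digitsS (hσP y hyU) (by omega)
            omega
          · by_cases hxzr : eqv F x zr
            · -- x in the class of zr
              by_cases hezz : eqv F z x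
              · have hzzr : eqv F z zr := eqv_trans hezz hxzr
                have hzzl : ¬ eqv F z zl := fun h =>
                  hxzl (eqv_trans (eqv_symm hezz) h)
                have hyzr : eqv F y zr := eqv_trans (eqv_symm hexy) hxzr
                have hyzl : ¬ eqv F y zl := fun h => hxzl (eqv_trans hexy h)
                have hsz : sec z = 0 := by
                  simp only [hsec]; rw [if_neg hzzl, if_pos hzzr, if_pos hzZ']
                have hsy : sec y = 1 := by
                  simp only [hsec]; rw [if_neg hyzl, if_pos hyzr, if_neg hyZ]
                have hb : base z = base y := base_eqv z hzU y hyU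
                  (eqv_trans hezz hexy)
                have : τ z < τ y := by
                  simp only [hτdef]
                  rw [hb, hsz, hsy]
                  exact digitsS (hσP z hzU) (by omega)
                omega
              · -- class of z differs from class of x = class of zr : σ zr < σ z, contra max
                have hbxz : base x < base z := by
                  rcases lt_or_eq_of_le (le_trans hbxy hbyz) with h | h
                  · exact h
                  · exact absurd (eqv_symm (base_inj x hxU z hzU h)) hezz
                have hbzr : base zr = base x := base_eqv zr hzrU x hxU (eqv_symm hxzr)
                have : σ zr < σ z := blk zr hzrU z hzU (hZQ zr hzrZ) (by omega)
                exact absurd (hzrmax z hzZ') (by omega)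
            · -- x in a middle class : forbidden triple (zl, y, zr)
              have hzlx : σ zl < σ x := by
                have h1' : σ zl ≤ σ x := hzlmin x hxZ'
                have : zl ≠ x := fun h => hxzl (h ▸ eqv_refl F x)
                have : σ zl ≠ σ x := fun h => this (hσ.1 hzlU hxU h)
                omega
              have hzly : σ zl < σ y := by
                by_contra h'
                push_neg at h'
                have := eqvLe hsub hσ hC hycon (eqv_symm hexy) hzlU h' hzlx.le
                exact hxzl (eqv_trans hexy this)
              have hyzr : σ y < σ zr := by
                by_contra h'
                push_neg at h'
                have hxzr' : σ x ≤ σ zr := hzrmax x hxZ'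
                have := eqvLe hsub hσ hC hxcon hexy hzrU hxzr' h'
                exact hxzr this
              have hnzly : ¬ eqv F zl y := fun h =>
                hxzl (eqv_trans hexy (eqv_symm h))
              have hnyzr : ¬ eqv F y zr := fun h => hxzr (eqv_trans hexy h)
              have hnzlzr : ¬ eqv F zl zr := by
                intro h
                have h1' : σ zl ≤ σ x := hzlmin x hxZ'
                have h2' : σ x ≤ σ zr := hzrmax x hxZ'
                have := eqvLe hsub hσ hC (hZQ zl hzlZ) h hxU h1' h2'
                exact hxzl (eqv_symm this)
              exact hNo ⟨zl, y, zr, hzlU, hyU, hzrU, hZQ zl hzlZ, hycon, hZQ zr hzrZ,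
                hnzly, hnyzr, hnzlzr, hzly, hyzr, hzlZ, hyZ, hzrZ⟩
        · by_cases heyz : eqv F y z
          · -- C4 : y in the class of z
            by_cases hzzl : eqv F z zl
            · have hnxz : ¬ eqv F x z := fun h => hexy (eqv_trans h (eqv_symm heyz))
              have hbyzl : base y = base zl := base_eqv y hyU zl hzlU
                (eqv_trans heyz hzzl)
              rcases lt_or_eq_of_le hbxy with h | h
              · have : σ x < σ zl := blk x hxU zl hzlU hxcon (by omega)
                exact absurd (hzlmin x hxZ') (by omega)
              · exact hexy (base_inj x hxU y hyU h)
            · by_cases hzzr : eqv F z zr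
              · have hyzr : eqv F y zr := eqv_trans heyz hzzr
                have hyzl : ¬ eqv F y zl := fun h =>
                  hzzl (eqv_trans (eqv_symm heyz) h)
                have hsz : sec z = 0 := by
                  simp only [hsec]
                  rw [if_neg hzzl, if_pos hzzr, if_pos hzZ']
                have hsy : sec y = 1 := by
                  simp only [hsec]; rw [if_neg hyzl, if_pos hyzr, if_neg hyZ]
                have hb : base y = base z := base_eqv y hyU z hzU heyz
                have : τ z < τ y := by
                  simp only [hτdef]
                  rw [← hb, hsz, hsy]
                  exact digitsS (hσP z hzU) (by omega)
                omega
              · -- z in a middle class : forbidden triple (zl, y, zr)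
                have hzlz : σ zl ≤ σ z := hzlmin z hzZ'
                have hzly : σ zl < σ y := by
                  by_contra h'
                  push_neg at h'
                  have := eqvLe hsub hσ hC hycon heyz hzlU h' hzlz
                  exact hzzl (eqv_trans (eqv_symm heyz) this)
                have hyzr : σ y < σ zr := by
                  by_contra h'
                  push_neg at h'
                  have hzzr' : σ z ≤ σ zr := hzrmax z hzZ'
                  have := eqvLe hsub hσ hC hzcon (eqv_symm heyz) hzrU hzzr' h'
                  exact hzzr this
                have hnzly : ¬ eqv F zl y := fun h =>
                  hzzl (eqv_trans (eqv_symm heyz) (eqv_symm h))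
                have hnyzr : ¬ eqv F y zr := fun h =>
                  hzzr (eqv_trans (eqv_symm heyz) h)
                have hnzlzr : ¬ eqv F zl zr := by
                  intro h
                  have h2' : σ z ≤ σ zr := hzrmax z hzZ'
                  have := eqvLe hsub hσ hC (hZQ zl hzlZ) h hzU hzlz h2'
                  exact hzzl (eqv_symm this)
                exact hNo ⟨zl, y, zr, hzlU, hyU, hzrU, hZQ zl hzlZ, hycon, hZQ zr hzrZ,
                  hnzly, hnyzr, hnzlzr, hzly, hyzr, hzlZ, hyZ, hzrZ⟩
          · -- C2 : three distinct classes, forbidden triple (x, y, z)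
            have hb1 : base x < base y := by
              rcases lt_or_eq_of_le hbxy with h | h
              · exact h
              · exact absurd (base_inj x hxU y hyU h) hexy
            have hb2 : base y < base z := by
              rcases lt_or_eq_of_le hbyz with h | h
              · exact h
              · exact absurd (base_inj y hyU z hzU h) heyz
            have hnxz : ¬ eqv F x z := by
              intro h
              have := base_eqv x hxU z hzU h
              omega
            exact hNo ⟨x, y, z, hxU, hyU, hzU, hxcon, hycon, hzcon, hexy, heyz, hnxz,
              blk x hxU y hyU hxcon hb1, blk y hyU z hzU hycon hb2, hxZ', hyZ, hzZ'⟩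
      · -- C1 : y unconstrained is impossible between two constrained classes
        have hx₀ : con F (rep x) := con_of_eqv (eqv_symm (hrep x hxU).2.1) hxcon
        obtain ⟨A, hA, hx₀A⟩ := hx₀
        obtain ⟨B, hB, hzB⟩ := hzcon
        have h1' : σ (rep x) ≤ σ (rep y) := by
          have := base_le y hyU; exact hbxy
        have h2' : σ (rep y) ≤ σ z := le_trans hbyz (base_le z hzU)
        have := L1walk hsub hσ (hC A hA B hB) hA hB (rep x) hx₀A z hzB (rep y)
          (hrep y hyU).1 h1' h2'
        exact hycon (con_of_eqv (hrep y hyU).2.1 this)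
    · -- an old member R
      intro x hxU y hyU z hzU h1 h2 hxR hzR
      have hxR' : x ∈ R := hxR
      have hzR' : z ∈ R := hzR
      show y ∈ R
      have hbxy : base x ≤ base y := tau_le_base x hxU y hyU h1
      have hbyz : base y ≤ base z := tau_le_base y hyU z hzU h2
      have hx₀R : rep x ∈ R := ((hrep x hxU).2.1 R hR).2 hxR'
      have h1' : σ (rep x) ≤ σ (rep y) := hbxy
      have h2' : σ (rep y) ≤ σ z := le_trans hbyz (base_le z hzU)
      have hy₀R : rep y ∈ R := hσ.2 R hR (rep x) (hrep x hxU).1 (rep y)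
        (hrep y hyU).1 z hzU h1' h2' hx₀R hzR'
      exact ((hrep y hyU).2.1 R hR).1 hy₀R

lemma constructZnQ (hsub : ∀ A ∈ F, A ⊆ U) (hC : Conn F) (hσ : IsC1POrdering U F σ)
    {Z : Finset α} (hZU : Z ⊆ U)
    (hHr : ∀ b ∈ Z, con F b → ∀ c ∈ U, con F c → ¬ eqv F b c → σ b < σ c → c ∈ Z) :
    HasC1P U (insert Z F) := by
  classical
  obtain ⟨rep, hrep⟩ := exists_rep hσ
  set M := U.sup σ with hM
  set P := M + 2 with hP
  set base : α → ℕ := fun x => if con F x then σ (rep x) else M + 1 with hbase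
  have hσP : ∀ x ∈ U, σ x < P := fun x hx => by
    have := Finset.le_sup (f := σ) hx; omega
  have base_le : ∀ x ∈ U, con F x → base x ≤ σ x := by
    intro x hx hcon
    simp only [hbase, if_pos hcon]
    exact (hrep x hx).2.2 x hx (eqv_refl F x)
  have base_con : ∀ x ∈ U, con F x → base x = σ (rep x) := by
    intro x hx hcon; simp only [hbase, if_pos hcon]
  have base_ncon : ∀ x, ¬ con F x → base x = M + 1 := by
    intro x hcon; simp only [hbase, if_neg hcon]
  have base_M : ∀ x ∈ U, con F x → base x ≤ M := by
    intro x hx hcon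
    have h1 := base_le x hx hcon
    have := Finset.le_sup (f := σ) hx; omega
  have base_eqv : ∀ x ∈ U, ∀ y ∈ U, eqv F x y → base x = base y := by
    intro x hx y hy he
    by_cases hcx : con F x
    · have hcy : con F y := con_of_eqv he hcx
      rw [base_con x hx hcx, base_con y hy hcy]
      refine le_antisymm ?_ ?_
      · exact (hrep x hx).2.2 (rep y) (hrep y hy).1
          (eqv_trans (hrep y hy).2.1 (eqv_symm he))
      · exact (hrep y hy).2.2 (rep x) (hrep x hx).1
          (eqv_trans (hrep x hx).2.1 he)
    · have hcy : ¬ con F y := fun h => hcx (con_of_eqv (eqv_symm he) h)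
      rw [base_ncon x hcx, base_ncon y hcy]
  have base_inj : ∀ x ∈ U, ∀ y ∈ U, con F x → con F y → base x = base y → eqv F x y := by
    intro x hx y hy hcx hcy hb
    rw [base_con x hx hcx, base_con y hy hcy] at hb
    have : rep x = rep y := hσ.1 (hrep x hx).1 (hrep y hy).1 hb
    exact eqv_trans (eqv_symm (hrep x hx).2.1) (this ▸ (hrep y hy).2.1)
  have blk : ∀ x ∈ U, ∀ y ∈ U, con F x → con F y → base x < base y → σ x < σ y := by
    intro x hx y hy hcon hcony hb
    by_contra h'
    push_neg at h'
    rcases lt_or_eq_of_le h' with h'' | h''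
    · have h1 : σ (rep x) ≤ σ y := by
        have hb1 := base_con x hx hcon
        have := base_le y hy hcony; omega
      have hcx : con F (rep x) := con_of_eqv (eqv_symm (hrep x hx).2.1) hcon
      have := eqvLe hsub hσ hC hcx (hrep x hx).2.1 hy h1 h''.le
      have hxy : eqv F x y := eqv_trans (eqv_symm (hrep x hx).2.1) this
      have := base_eqv x hx y hy hxy
      omega
    · have : y = x := hσ.1 hy hx h''
      subst this
      omega
  by_cases hZQne : ∃ b ∈ Z, con F b
  · -- there are constrained columns of Z; zl := leftmost of them
    obtain ⟨zl, hzlZ, hzlcon, hzlmin⟩ : ∃ zl ∈ Z, con F zl ∧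
        ∀ b ∈ Z, con F b → σ zl ≤ σ b := by
      obtain ⟨b₀, hb₀⟩ := hZQne
      obtain ⟨zl, hzl, hmin⟩ := Finset.exists_min_image
        (Z.filter (fun b => con F b)) σ ⟨b₀, Finset.mem_filter.2 hb₀⟩
      rw [Finset.mem_filter] at hzl
      exact ⟨zl, hzl.1, hzl.2, fun b hb hc => hmin b (Finset.mem_filter.2 ⟨hb, hc⟩)⟩
    have hzlU : zl ∈ U := hZU hzlZ
    set sec : α → ℕ := fun x =>
      if con F x then (if eqv F x zl then (if x ∈ Z then 1 else 0) else 0)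
      else (if x ∈ Z then 0 else 1) with hsec
    set τ : α → ℕ := fun x => base x * (P*P) + sec x * P + σ x with hτdef
    have hsecP : ∀ x, sec x < P := by
      intro x; simp only [hsec]; split_ifs <;> omega
    have tau_le_base : ∀ x ∈ U, ∀ y ∈ U, τ x ≤ τ y → base x ≤ base y := by
      intro x hx y hy h
      exact digits_le_b (hsecP y) (hσP y hy) h
    refine ⟨τ, ?_, ?_⟩
    · intro x hx y hy h
      simp only [hτdef] at h
      obtain ⟨_, _, h3⟩ := digits_inj (hsecP x) (hσP x hx) (hsecP y) (hσP y hy) h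
      exact hσ.1 hx hy h3
    · intro R hR
      rw [Finset.mem_insert] at hR
      rcases hR with hRZ | hR
      · -- the new set Z
        rw [hRZ]
        intro x hxU y hyU z hzU h1 h2 hxZ hzZ
        have hxZ' : x ∈ Z := hxZ
        have hzZ' : z ∈ Z := hzZ
        show y ∈ Z
        by_contra hyZ
        have hbxy : base x ≤ base y := tau_le_base x hxU y hyU h1
        have hbyz : base y ≤ base z := tau_le_base y hyU z hzU h2
        by_cases hcx : con F x
        · -- x constrained
          have hxzly : ∀ hycon : con F y, ¬ eqv F x y → False := by
            -- x, y in distinct classes: base x < base y, so σ x < σ y, then hHr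
            intro hycon hexy
            have hbx : base x < base y := by
              rcases lt_or_eq_of_le hbxy with h | h
              · exact h
              · exact absurd (base_inj x hxU y hyU hcx hycon h) hexy
            exact hyZ (hHr x hxZ' hcx y hyU hycon hexy (blk x hxU y hyU hcx hycon hbx))
          have hyQcase : con F y → False := by
            intro hycon
            by_cases hexy : eqv F x y
            · -- same class : compare with zl
              by_cases hxzl : eqv F x zl
              · have hyzl : eqv F y zl := eqv_trans (eqv_symm hexy) hxzl
                have hsx : sec x = 1 := by
                  simp only [hsec]; rw [if_pos hcx, if_pos hxzl, if_pos hxZ']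
                have hsy : sec y = 0 := by
                  simp only [hsec]; rw [if_pos hycon, if_pos hyzl, if_neg hyZ]
                have hb : base y = base x := base_eqv y hyU x hxU (eqv_symm hexy)
                have : τ y < τ x := by
                  simp only [hτdef]
                  rw [hb, hsx, hsy]
                  exact digitsS (hσP y hyU) (by omega)
                omega
              · -- x not in zl's class : σ zl < σ y, apply hHr at zl
                have hzlx : σ zl ≤ σ x := hzlmin x hxZ' hcx
                have hzly : σ zl < σ y := by
                  by_contra h'
                  push_neg at h'
                  have hyzlne : y ≠ zl := fun h => hyZ (h ▸ hzlZ)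
                  have h'' : σ y < σ zl ∨ σ y = σ zl := lt_or_eq_of_le h'
                  rcases h'' with h'' | h''
                  · have := eqvLe hsub hσ hC hycon (eqv_symm hexy) hzlU h''.le hzlx
                    exact hxzl (eqv_trans hexy this)
                  · exact hyzlne (hσ.1 hyU hzlU h'')
                have hnzly : ¬ eqv F zl y := fun h =>
                  hxzl (eqv_trans hexy (eqv_symm h))
                exact hyZ (hHr zl hzlZ hzlcon y hyU hycon hnzly hzly)
            · exact hxzly hycon hexy
          by_cases hcy : con F y
          · exact hyQcase hcy
          · -- y unconstrained : base y = M + 1 > base z unless z unconstrained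
            by_cases hcz : con F z
            · have := base_M z hzU hcz
              have := base_ncon y hcy
              omega
            · -- z unconstrained : sec z = 0 < 1 = sec y with equal bases
              have hby : base y = M + 1 := base_ncon y hcy
              have hbz : base z = M + 1 := base_ncon z hcz
              have hsy : sec y = 1 := by
                simp only [hsec]; rw [if_neg hcy, if_neg hyZ]
              have hsz : sec z = 0 := by
                simp only [hsec]; rw [if_neg hcz, if_pos hzZ']
              have : τ z < τ y := by
                simp only [hτdef]
                rw [hby, hbz, hsy, hsz]
                exact digitsS (hσP z hzU) (by omega)
              omega
        · -- x unconstrained : base x = M+1 forces y, z unconstrained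
          have hbx : base x = M + 1 := base_ncon x hcx
          have hcz : ¬ con F z := by
            intro hcz
            have := base_M z hzU hcz
            omega
          have hcy : ¬ con F y := by
            intro hcy
            have := base_M y hyU hcy
            have := base_ncon z hcz
            omega
          have hsy : sec y = 1 := by
            simp only [hsec]; rw [if_neg hcy, if_neg hyZ]
          have hsz : sec z = 0 := by
            simp only [hsec]; rw [if_neg hcz, if_pos hzZ']
          have : τ z < τ y := by
            simp only [hτdef]
            rw [base_ncon y hcy, base_ncon z hcz, hsy, hsz]
            exact digitsS (hσP z hzU) (by omega)
          omega
      · -- an old member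
        intro x hxU y hyU z hzU h1 h2 hxR hzR
        have hxR' : x ∈ R := hxR
        have hzR' : z ∈ R := hzR
        show y ∈ R
        have hcx : con F x := ⟨R, hR, hxR'⟩
        have hcz : con F z := ⟨R, hR, hzR'⟩
        have hbxy : base x ≤ base y := tau_le_base x hxU y hyU h1
        have hbyz : base y ≤ base z := tau_le_base y hyU z hzU h2
        have hcy : con F y := by
          by_contra hcy
          have := base_ncon y hcy
          have := base_M z hzU hcz
          omega
        have hx₀R : rep x ∈ R := ((hrep x hxU).2.1 R hR).2 hxR'
        have h1' : σ (rep x) ≤ σ (rep y) := by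
          have := base_con x hxU hcx
          have := base_con y hyU hcy
          omega
        have h2' : σ (rep y) ≤ σ z := by
          have := base_con y hyU hcy
          have := base_le z hzU hcz
          omega
        have hy₀R : rep y ∈ R := hσ.2 R hR (rep x) (hrep x hxU).1 (rep y)
          (hrep y hyU).1 z hzU h1' h2' hx₀R hzR'
        exact ((hrep y hyU).2.1 R hR).1 hy₀R
  · -- no constrained column of Z at all
    push_neg at hZQne
    set sec : α → ℕ := fun x =>
      if con F x then 0 else (if x ∈ Z then 0 else 1) with hsec
    set τ : α → ℕ := fun x => base x * (P*P) + sec x * P + σ x with hτdef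
    have hsecP : ∀ x, sec x < P := by
      intro x; simp only [hsec]; split_ifs <;> omega
    have tau_le_base : ∀ x ∈ U, ∀ y ∈ U, τ x ≤ τ y → base x ≤ base y := by
      intro x hx y hy h
      exact digits_le_b (hsecP y) (hσP y hy) h
    refine ⟨τ, ?_, ?_⟩
    · intro x hx y hy h
      simp only [hτdef] at h
      obtain ⟨_, _, h3⟩ := digits_inj (hsecP x) (hσP x hx) (hsecP y) (hσP y hy) h
      exact hσ.1 hx hy h3
    · intro R hR
      rw [Finset.mem_insert] at hR
      rcases hR with hRZ | hR
      · rw [hRZ]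
        intro x hxU y hyU z hzU h1 h2 hxZ hzZ
        have hxZ' : x ∈ Z := hxZ
        have hzZ' : z ∈ Z := hzZ
        show y ∈ Z
        by_contra hyZ
        have hcx : ¬ con F x := hZQne x hxZ'
        have hcz : ¬ con F z := hZQne z hzZ'
        have hbxy : base x ≤ base y := tau_le_base x hxU y hyU h1
        have hbyz : base y ≤ base z := tau_le_base y hyU z hzU h2
        have hcy : ¬ con F y := by
          intro hcy
          have := base_M y hyU hcy
          have := base_ncon x hcx
          omega
        have hsy : sec y = 1 := by
          simp only [hsec]; rw [if_neg hcy, if_neg hyZ]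
        have hsz : sec z = 0 := by
          simp only [hsec]; rw [if_neg hcz, if_pos hzZ']
        have : τ z < τ y := by
          simp only [hτdef]
          rw [base_ncon y hcy, base_ncon z hcz, hsy, hsz]
          exact digitsS (hσP z hzU) (by omega)
        omega
      · intro x hxU y hyU z hzU h1 h2 hxR hzR
        have hxR' : x ∈ R := hxR
        have hzR' : z ∈ R := hzR
        show y ∈ R
        have hcx : con F x := ⟨R, hR, hxR'⟩
        have hcz : con F z := ⟨R, hR, hzR'⟩
        have hbxy : base x ≤ base y := tau_le_base x hxU y hyU h1
        have hbyz : base y ≤ base z := tau_le_base y hyU z hzU h2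
        have hcy : con F y := by
          by_contra hcy
          have := base_ncon y hcy
          have := base_M z hzU hcz
          omega
        have hx₀R : rep x ∈ R := ((hrep x hxU).2.1 R hR).2 hxR'
        have h1' : σ (rep x) ≤ σ (rep y) := by
          have := base_con x hxU hcx
          have := base_con y hyU hcy
          omega
        have h2' : σ (rep y) ≤ σ z := by
          have := base_con y hyU hcy
          have := base_le z hzU hcz
          omega
        have hy₀R : rep y ∈ R := hσ.2 R hR (rep x) (hrep x hxU).1 (rep y)
          (hrep y hyU).1 z hzU h1' h2' hx₀R hzR'
        exact ((hrep y hyU).2.1 R hR).1 hy₀R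

lemma third_class (hsub : ∀ A ∈ F, A ⊆ U) (hC : Conn F) {b₁ b₂ : α}
    (hb₁ : con F b₁) (hb₂ : con F b₂) (hne : ¬ eqv F b₁ b₂) :
    ∃ w ∈ U, con F w ∧ ¬ eqv F w b₁ ∧ ¬ eqv F w b₂ := by
  by_contra h'
  push_neg at h'
  have hall : ∀ w, con F w → eqv F w b₁ ∨ eqv F w b₂ := by
    intro w hw
    by_contra h''
    push_neg at h''
    exact h''.2 (h' w (mem_U_of_con hsub hw) hw h''.1)
  -- a member M separating b₁ from b₂
  have hex : ∃ M ∈ F, ¬ (b₁ ∈ M ↔ b₂ ∈ M) := by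
    by_contra h''; push_neg at h''; exact hne h''
  obtain ⟨M, hM, hMi⟩ := hex
  -- wlog-style: handle the two separation cases
  have main : ∀ (u v : α), con F u → con F v → ¬ eqv F u v → u ∈ M → v ∉ M →
      (∀ w, con F w → eqv F w u ∨ eqv F w v) → False := by
    intro u v hu hv huv huM hvM hall'
    have hpure : ∀ t ∈ M, eqv F t u := by
      intro t ht
      rcases hall' t ⟨M, hM, ht⟩ with h | h
      · exact h
      · exact absurd ((h M hM).1 ht) hvM
    have hiso : ∀ X, Overlaps M X → X ∈ F → False := by
      intro X hov hX
      obtain ⟨t, ht⟩ := hov.1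
      rw [Finset.mem_inter] at ht
      refine hov.2.1 (fun s hs => ?_)
      have h1 : eqv F s t := eqv_trans (hpure s hs) (eqv_symm (hpure t ht.1))
      exact (h1 X hX).2 ht.2
    obtain ⟨N, hN, hvN⟩ := hv
    have hMN : M ≠ N := fun h => hvM (h ▸ hvN)
    rcases (hC M hM N hN).cases_head with h | ⟨C, hrel, _⟩
    · exact hMN h
    · exact hiso C hrel.2.2 hrel.2.1
  by_cases h1 : b₁ ∈ M
  · have h2 : b₂ ∉ M := fun h => hMi ⟨fun _ => h, fun _ => h1⟩
    exact main b₁ b₂ hb₁ hb₂ hne h1 h2 hall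
  · have h2 : b₂ ∈ M := by
      rcases Decidable.em (b₂ ∈ M) with h | h
      · exact h
      · exact absurd ⟨fun a => absurd a h1, fun a => absurd a h⟩ hMi
    exact main b₂ b₁ hb₂ hb₁ (fun h => hne (eqv_symm h)) h2 h1
      (fun w hw => (hall w hw).symm)

/-- The double-coincidence case of the dichotomy: both end classes are mixed. -/
lemma doubleCase (hsub : ∀ A ∈ F, A ⊆ U) (hC : Conn F) (hσ : IsC1POrdering U F σ)
    {Z : Finset α} (hZU : Z ⊆ U) {zl zr c₁ c₂ : α}
    (hzlZ : zl ∈ Z) (hzrZ : zr ∈ Z) (hzlc : con F zl) (hzrc : con F zr)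
    (hc₁U : c₁ ∈ U) (hc₂U : c₂ ∈ U) (hc₁c : con F c₁) (hc₂c : con F c₂)
    (hc₁Z : c₁ ∉ Z) (hc₂Z : c₂ ∉ Z)
    (hminB : ∀ w ∈ Z, con F w → σ zl ≤ σ w) (hmaxB : ∀ w ∈ Z, con F w → σ w ≤ σ zr)
    (h1 : σ zl < σ c₁) (h2 : σ c₂ < σ zr)
    (hK : eqv F zl c₂) (hK' : eqv F zr c₁)
    (hne1 : ¬ eqv F zl c₁) (hne2 : ¬ eqv F zr c₂) :
    ∃ a b c, a ∈ U ∧ b ∈ U ∧ c ∈ U ∧ con F a ∧ con F b ∧ con F c ∧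
      ¬ eqv F a b ∧ ¬ eqv F b c ∧ ¬ eqv F a c ∧ σ a < σ b ∧ σ b < σ c ∧
      ((a ∈ Z ∧ b ∉ Z ∧ c ∈ Z) ∨ (a ∉ Z ∧ b ∈ Z ∧ c ∉ Z)) := by
  have hzlU : zl ∈ U := hZU hzlZ
  have hzrU : zr ∈ U := hZU hzrZ
  have hzlzr : ¬ eqv F zl zr := fun h => hne2 (eqv_trans (eqv_symm h) hK)
  obtain ⟨w, hwU, hwc, hw1, hw2⟩ := third_class hsub hC hzlc hzrc hzlzr
  have hwzl : w ≠ zl := fun h => hw1 (h ▸ eqv_refl F zl)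
  have hwzr : w ≠ zr := fun h => hw2 (h ▸ eqv_refl F zr)
  have hσwzl : σ w ≠ σ zl := fun h => hwzl (hσ.1 hwU hzlU h)
  have hσwzr : σ w ≠ σ zr := fun h => hwzr (hσ.1 hwU hzrU h)
  have hwc₂ : ¬ eqv F w c₂ := fun h => hw1 (eqv_trans h (eqv_symm hK))
  have hwc₁ : ¬ eqv F w c₁ := fun h => hw2 (eqv_trans h (eqv_symm hK'))
  have hc₂c₁ : ¬ eqv F c₂ c₁ := fun h => hne1 (eqv_trans hK h)
  by_cases hwZ : w ∈ Z
  · -- w ∈ Z : strictly inside, triple (c₂, w, c₁)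
    have hzlw : σ zl < σ w := by
      have := hminB w hwZ hwc; omega
    have hwzr' : σ w < σ zr := by
      have := hmaxB w hwZ hwc; omega
    have hc₂w : σ c₂ < σ w := by
      by_contra h'
      push_neg at h'
      have hwc₂' : w ≠ c₂ := fun h => hc₂Z (h ▸ hwZ)
      have : σ w ≠ σ c₂ := fun h => hwc₂' (hσ.1 hwU hc₂U h)
      have := eqvLe hsub hσ hC hzlc hK hwU (by omega) (by omega)
      exact hw1 (eqv_symm this)
    have hwc₁' : σ w < σ c₁ := by
      by_contra h'
      push_neg at h'
      have hwc : w ≠ c₁ := fun h => hc₁Z (h ▸ hwZ)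
      have hσne : σ w ≠ σ c₁ := fun h => hwc (hσ.1 hwU hc₁U h)
      have := eqvLe hsub hσ hC hc₁c (eqv_symm hK') hwU (by omega) (by omega)
      exact hw2 (eqv_trans (eqv_symm this) (eqv_symm hK'))
    exact ⟨c₂, w, c₁, hc₂U, hwU, hc₁U, hc₂c, hwc, hc₁c,
      fun h => hwc₂ (eqv_symm h), hwc₁, hc₂c₁, hc₂w, hwc₁',
      Or.inr ⟨hc₂Z, hwZ, hc₁Z⟩⟩
  · -- w ∉ Z
    rcases lt_or_gt_of_ne hσwzl with hl | hl
    · -- w left of zl : (w, zl, c₁)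
      exact ⟨w, zl, c₁, hwU, hzlU, hc₁U, hwc, hzlc, hc₁c,
        hw1, hne1, hwc₁, hl, h1, Or.inr ⟨hwZ, hzlZ, hc₁Z⟩⟩
    · rcases lt_or_gt_of_ne hσwzr with hr | hr
      · -- zl < w < zr : (zl, w, zr) is a 1-0-1
        exact ⟨zl, w, zr, hzlU, hwU, hzrU, hzlc, hwc, hzrc,
          fun h => hw1 (eqv_symm h), hw2, hzlzr, hl, hr,
          Or.inl ⟨hzlZ, hwZ, hzrZ⟩⟩
      · -- w right of zr : (c₂, zr, w)
        exact ⟨c₂, zr, w, hc₂U, hzrU, hwU, hc₂c, hzrc, hwc,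
          fun h => hne2 (eqv_symm h), fun h => hw2 (eqv_symm h),
          fun h => hwc₂ (eqv_symm h), h2, hr, Or.inr ⟨hc₂Z, hzrZ, hwZ⟩⟩

/-- If the "attached to the right end" condition fails for both `σ` and its reversal,
there is a violating triple. -/
lemma dichotomy (hsub : ∀ A ∈ F, A ⊆ U) (hC : Conn F) (hσ : IsC1POrdering U F σ)
    {Z : Finset α} (hZU : Z ⊆ U)
    (hH1 : ¬ ∀ b ∈ Z, con F b → ∀ c ∈ U, con F c → ¬ eqv F b c → σ b < σ c → c ∈ Z)
    (hH2 : ¬ ∀ b ∈ Z, con F b → ∀ c ∈ U, con F c → ¬ eqv F b c →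
      revOf U σ b < revOf U σ c → c ∈ Z) :
    ∃ a b c, a ∈ U ∧ b ∈ U ∧ c ∈ U ∧ con F a ∧ con F b ∧ con F c ∧
      ¬ eqv F a b ∧ ¬ eqv F b c ∧ ¬ eqv F a c ∧ σ a < σ b ∧ σ b < σ c ∧
      ((a ∈ Z ∧ b ∉ Z ∧ c ∈ Z) ∨ (a ∉ Z ∧ b ∈ Z ∧ c ∉ Z)) := by
  classical
  push_neg at hH1 hH2
  obtain ⟨b₁, hb₁Z, hb₁c, c₁, hc₁U, hc₁c, hb₁c₁, hσ₁, hc₁Z⟩ := hH1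
  obtain ⟨b₂, hb₂Z, hb₂c, c₂, hc₂U, hc₂c, hb₂c₂, hσ₂', hc₂Z⟩ := hH2
  have hb₁U : b₁ ∈ U := hZU hb₁Z
  have hb₂U : b₂ ∈ U := hZU hb₂Z
  have hσ₂ : σ c₂ < σ b₂ := (revOf_lt hb₂U hc₂U).1 hσ₂'
  -- extremal constrained elements of Z
  obtain ⟨zl, hzlZ, hzlc, hzlmin⟩ : ∃ zl ∈ Z, con F zl ∧ ∀ w ∈ Z, con F w → σ zl ≤ σ w := by
    obtain ⟨zl, hzl, hmin⟩ := Finset.exists_min_image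
      (Z.filter (fun b => con F b)) σ ⟨b₁, Finset.mem_filter.2 ⟨hb₁Z, hb₁c⟩⟩
    rw [Finset.mem_filter] at hzl
    exact ⟨zl, hzl.1, hzl.2, fun w hw hc => hmin w (Finset.mem_filter.2 ⟨hw, hc⟩)⟩
  obtain ⟨zr, hzrZ, hzrc, hzrmax⟩ : ∃ zr ∈ Z, con F zr ∧ ∀ w ∈ Z, con F w → σ w ≤ σ zr := by
    obtain ⟨zr, hzr, hmax⟩ := Finset.exists_max_image
      (Z.filter (fun b => con F b)) σ ⟨b₁, Finset.mem_filter.2 ⟨hb₁Z, hb₁c⟩⟩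
    rw [Finset.mem_filter] at hzr
    exact ⟨zr, hzr.1, hzr.2, fun w hw hc => hmax w (Finset.mem_filter.2 ⟨hw, hc⟩)⟩
  have hzlU : zl ∈ U := hZU hzlZ
  have hzrU : zr ∈ U := hZU hzrZ
  -- upgrade the witnesses to the extremal elements
  have h1 : σ zl < σ c₁ := by
    have := hzlmin b₁ hb₁Z hb₁c; omega
  have h2 : σ c₂ < σ zr := by
    have := hzrmax b₂ hb₂Z hb₂c; omega
  have hne1 : ¬ eqv F zl c₁ := by
    intro h
    by_cases hzb : zl = b₁
    · exact hb₁c₁ (hzb ▸ h)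
    · have hzb' : σ zl ≠ σ b₁ := fun h' => hzb (hσ.1 hzlU hb₁U h')
      have hle : σ zl ≤ σ b₁ := hzlmin b₁ hb₁Z hb₁c
      have := eqvLe hsub hσ hC hzlc h hb₁U hle hσ₁.le
      exact hb₁c₁ (eqv_trans (eqv_symm this) h)
  have hne2 : ¬ eqv F zr c₂ := by
    intro h
    have hle : σ b₂ ≤ σ zr := hzrmax b₂ hb₂Z hb₂c
    have := eqvLe hsub hσ hC hc₂c (eqv_symm h) hb₂U hσ₂.le hle
    exact hb₂c₂ (eqv_symm this)
  have hσc₂zl : σ c₂ ≠ σ zl :=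
    fun h => (show c₂ ≠ zl from fun e => hc₂Z (e ▸ hzlZ)) (hσ.1 hc₂U hzlU h)
  have hσc₁zr : σ c₁ ≠ σ zr :=
    fun h => (show c₁ ≠ zr from fun e => hc₁Z (e ▸ hzrZ)) (hσ.1 hc₁U hzrU h)
  by_cases hA : eqv F zl c₂
  · by_cases hB : eqv F zr c₁
    · exact doubleCase hsub hC hσ hZU hzlZ hzrZ hzlc hzrc hc₁U hc₂U hc₁c hc₂c
        hc₁Z hc₂Z hzlmin hzrmax h1 h2 hA hB hne1 hne2
    · rcases lt_or_gt_of_ne hσc₁zr with hcase | hcase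
      · -- (zl, c₁, zr) 1-0-1
        have hzlzr : ¬ eqv F zl zr := by
          intro h
          have := eqvLe hsub hσ hC hzlc h hc₁U h1.le hcase.le
          exact hne1 this
        exact ⟨zl, c₁, zr, hzlU, hc₁U, hzrU, hzlc, hc₁c, hzrc,
          hne1, fun h => hB (eqv_symm h), hzlzr, h1, hcase,
          Or.inl ⟨hzlZ, hc₁Z, hzrZ⟩⟩
      · -- (c₂, zr, c₁) 0-1-0
        have hcc : ¬ eqv F c₂ c₁ := by
          intro h
          have := eqvLe hsub hσ hC hc₂c h hzrU h2.le hcase.le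
          exact hne2 (eqv_symm this)
        exact ⟨c₂, zr, c₁, hc₂U, hzrU, hc₁U, hc₂c, hzrc, hc₁c,
          fun h => hne2 (eqv_symm h), hB, hcc, h2, hcase,
          Or.inr ⟨hc₂Z, hzrZ, hc₁Z⟩⟩
  · rcases lt_or_gt_of_ne hσc₂zl with hcase | hcase
    · -- (c₂, zl, c₁) 0-1-0
      have hcc : ¬ eqv F c₂ c₁ := by
        intro h
        have := eqvLe hsub hσ hC hc₂c h hzlU hcase.le h1.le
        exact hA (eqv_symm this)
      exact ⟨c₂, zl, c₁, hc₂U, hzlU, hc₁U, hc₂c, hzlc, hc₁c,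
        fun h => hA (eqv_symm h), hne1, hcc, hcase, h1,
        Or.inr ⟨hc₂Z, hzlZ, hc₁Z⟩⟩
    · -- (zl, c₂, zr) 1-0-1
      have hzlzr : ¬ eqv F zl zr := by
        intro h
        have := eqvLe hsub hσ hC hzlc h hc₂U hcase.le h2.le
        exact hA this
      exact ⟨zl, c₂, zr, hzlU, hc₂U, hzrU, hzlc, hc₂c, hzrc,
        hA, fun h => hne2 (eqv_symm h), hzlzr, hcase, h2,
        Or.inl ⟨hzlZ, hc₂Z, hzrZ⟩⟩

end Construct

end C1Paux

open C1Paux in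
/-- Let `𝓡'` be a nonempty family with the consecutive-ones property
over `U` whose overlap graph is connected, and let `Q = ⋃ 𝓡'`. Then `𝓡' ∪ {Z}` fails
C1P iff some consecutive-ones ordering `σ` of `𝓡'` places columns `a, b, c` of three
pairwise distinct constrained Venn classes of `𝓡'` with `σ a < σ b < σ c` forming a
1-0-1 configuration for `Z`, or a 0-1-0 configuration for `Z` with `Z ⊄ Q`. -/
theorem fails_C1P_iff_violation {α : Type*} [DecidableEq α]
    (U : Finset α) (𝓡' : Finset (Finset α)) (hsub : ∀ R ∈ 𝓡', R ⊆ U)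
    (hne : 𝓡'.Nonempty) (hC1P : HasC1P U 𝓡')
    (hconn : (overlapGraph 𝓡').Connected)
    (Z : Finset α) (hZU : Z ⊆ U) :
    ¬ HasC1P U (insert Z 𝓡') ↔
      ∃ σ : α → ℕ, IsC1POrdering U 𝓡' σ ∧
        ∃ a ∈ U, ∃ b ∈ U, ∃ c ∈ U,
          (∃ R ∈ 𝓡', a ∈ R) ∧ (∃ R ∈ 𝓡', b ∈ R) ∧ (∃ R ∈ 𝓡', c ∈ R) ∧
          ¬ (∀ R ∈ 𝓡', (a ∈ R ↔ b ∈ R)) ∧ ¬ (∀ R ∈ 𝓡', (b ∈ R ↔ c ∈ R)) ∧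
          ¬ (∀ R ∈ 𝓡', (a ∈ R ↔ c ∈ R)) ∧
          σ a < σ b ∧ σ b < σ c ∧
          ((a ∈ Z ∧ b ∉ Z ∧ c ∈ Z) ∨
            (a ∉ Z ∧ b ∈ Z ∧ c ∉ Z ∧ ¬ ∀ x ∈ Z, ∃ R ∈ 𝓡', x ∈ R)) := by
  classical
  have hCn : Conn 𝓡' := conn_of_graph hconn
  constructor
  · intro hfail
    by_contra hR
    obtain ⟨σ₀, hσ₀⟩ := hC1P
    have hno : ∀ (σ : α → ℕ), IsC1POrdering U 𝓡' σ → ∀ a b c : α,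
        a ∈ U → b ∈ U → c ∈ U → con 𝓡' a → con 𝓡' b → con 𝓡' c →
        ¬ eqv 𝓡' a b → ¬ eqv 𝓡' b c → ¬ eqv 𝓡' a c → σ a < σ b → σ b < σ c →
        ((a ∈ Z ∧ b ∉ Z ∧ c ∈ Z) ∨
          (a ∉ Z ∧ b ∈ Z ∧ c ∉ Z ∧ ¬ ∀ x ∈ Z, ∃ R ∈ 𝓡', x ∈ R)) → False := by
      intro σ hσ a b c h1 h2 h3 h4 h5 h6 h7 h8 h9 h10 h11 h12
      exact hR ⟨σ, hσ, a, h1, b, h2, c, h3, h4, h5, h6, h7, h8, h9, h10, h11, h12⟩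
    by_cases hZQ : ∀ x ∈ Z, con 𝓡' x
    · apply hfail
      apply constructZQ hsub hCn hσ₀ hZU hZQ
      intro h
      obtain ⟨a, b, c, h1, h2, h3, h4, h5, h6, h7, h8, h9, h10, h11, h12, h13, h14⟩ := h
      exact hno σ₀ hσ₀ a b c h1 h2 h3 h4 h5 h6 h7 h8 h9 h10 h11 (Or.inl ⟨h12, h13, h14⟩)
    · have hZnQ : ¬ ∀ x ∈ Z, ∃ R ∈ 𝓡', x ∈ R := hZQ
      by_cases hH1 : ∀ b ∈ Z, con 𝓡' b → ∀ c ∈ U, con 𝓡' c → ¬ eqv 𝓡' b c →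
          σ₀ b < σ₀ c → c ∈ Z
      · exact hfail (constructZnQ hsub hCn hσ₀ hZU hH1)
      · by_cases hH2 : ∀ b ∈ Z, con 𝓡' b → ∀ c ∈ U, con 𝓡' c → ¬ eqv 𝓡' b c →
            revOf U σ₀ b < revOf U σ₀ c → c ∈ Z
        · exact hfail (constructZnQ hsub hCn (revOf_ordering hσ₀) hZU hH2)
        · obtain ⟨a, b, c, h1, h2, h3, h4, h5, h6, h7, h8, h9, h10, h11, hpat⟩ :=
            dichotomy hsub hCn hσ₀ hZU hH1 hH2
          rcases hpat with hp | hp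
          · exact hno σ₀ hσ₀ a b c h1 h2 h3 h4 h5 h6 h7 h8 h9 h10 h11 (Or.inl hp)
          · exact hno σ₀ hσ₀ a b c h1 h2 h3 h4 h5 h6 h7 h8 h9 h10 h11
              (Or.inr ⟨hp.1, hp.2.1, hp.2.2, hZnQ⟩)
  · rintro ⟨σ, hσ, a, haU, b, hbU, c, hcU, hca, hcb, hcc, hab, hbc, hac, hσab, hσbc, hpat⟩
      ⟨τ, hτ⟩
    have hτ' : IsC1POrdering U 𝓡' τ := isc1p_mono (Finset.subset_insert Z 𝓡') hτ
    have hca' : con 𝓡' a := hca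
    have hcb' : con 𝓡' b := hcb
    have hcc' : con 𝓡' c := hcc
    have hab' : ¬ eqv 𝓡' a b := hab
    have hbc' : ¬ eqv 𝓡' b c := hbc
    have hac' : ¬ eqv 𝓡' a c := hac
    have halign := pairAlign hsub hCn hne hσ hτ'
    have hmidτ : Mid (τ a) (τ b) (τ c) := by
      rcases halign with h | h
      · exact Or.inl ⟨(h a b hca' hcb' hab').1 hσab, (h b c hcb' hcc' hbc').1 hσbc⟩
      · exact Or.inr ⟨(h b c hcb' hcc' hbc').1 hσbc, (h a b hca' hcb' hab').1 hσab⟩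
    have hZconv : ConvexIn U τ (Z : Set α) := hτ.2 Z (Finset.mem_insert_self Z 𝓡')
    rcases hpat with ⟨haZ, hbZ, hcZ⟩ | ⟨haZ, hbZ, hcZ, hQ⟩
    · exact hbZ (convexMid hZconv haU hbU hcU haZ hcZ hmidτ)
    · push_neg at hQ
      obtain ⟨ζ, hζZ, hζn⟩ := hQ
      have hζn' : ¬ con 𝓡' ζ := by
        intro h
        obtain ⟨R, hR, hm⟩ := h
        exact absurd hm (hζn R hR)
      have hζU : ζ ∈ U := hZU hζZ
      have h1 : ¬ Mid (τ a) (τ ζ) (τ c) := fun hm =>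
        hζn' (conMid hsub hτ' hCn hca' hcc' hζU hm)
      have hτaζ : τ a ≠ τ ζ :=
        fun h => (show a ≠ ζ from fun e => hζn' (e ▸ hca')) (hτ'.1 haU hζU h)
      have hτcζ : τ c ≠ τ ζ :=
        fun h => (show c ≠ ζ from fun e => hζn' (e ▸ hcc')) (hτ'.1 hcU hζU h)
      rcases hmidτ with ⟨m1, m2⟩ | ⟨m1, m2⟩
      · have hside : τ ζ < τ a ∨ τ c < τ ζ := by unfold Mid at h1; omega
        rcases hside with h | h
        · exact haZ (convexMid hZconv hζU haU hbU hζZ hbZ (Or.inl ⟨h, m1⟩))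
        · exact hcZ (convexMid hZconv hbU hcU hζU hbZ hζZ (Or.inl ⟨m2, h⟩))
      · have hside : τ ζ < τ c ∨ τ a < τ ζ := by unfold Mid at h1; omega
        rcases hside with h | h
        · exact hcZ (convexMid hZconv hζU hcU hbU hζZ hbZ (Or.inl ⟨h, m1⟩))
        · exact haZ (convexMid hZconv hbU haU hζU hbZ hζZ (Or.inl ⟨m2, h⟩))
end
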